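/- arXiv:1811.07450 — 3 statements merged into one kernel-verified Lean document; each statement's English description precedes it below -/
import Mathlib

section
/- Let A, C > 0 and let (K_λ) be a family of bounded measurable real-valued functions on 𝔹 × 𝔹, indexed by λ ∈ ℂ with |λ| ≥ 1, such that ‖K_λ‖_∞ ≤ C|λ|³ and K_λ(x,y) = 0 whenever ‖x − y‖ > A|λ|^{-1}. Then for every f₁ ∈ L^q(𝔹) with q > 4/3 and every f₂ ∈ L²(𝔹), ∫∫ K_λ(x,y) f₁(x) f₂(y) dx dy → 0 as |λ| → ∞. -/
open MeasureTheory Metric Set Filter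
open scoped ENNReal Topology

noncomputable section

/-- `ℂ² ≅ ℝ⁴` with its Euclidean structure. -/
abbrev E4 := EuclideanSpace ℝ (Fin 4)

/-- The unit ball `𝔹` of `ℂ² ≅ ℝ⁴`. -/
def unitBall : Set E4 := Metric.ball 0 1

/-- The normalized Lebesgue measure on the unit ball `𝔹`. -/
def nu : Measure E4 := (volume unitBall)⁻¹ • (volume.restrict unitBall)

/-- The filter `|λ| → ∞` on `ℂ`. -/
def normAtTop : Filter ℂ := Filter.comap (fun lam : ℂ => ‖lam‖) Filter.atTop

lemma vol_uB_pos : (0 : ℝ≥0∞) < volume unitBall := measure_ball_pos _ _ one_pos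

lemma vol_uB_ne_top : volume unitBall ≠ ⊤ := measure_ball_lt_top.ne

instance : IsProbabilityMeasure nu := by
  constructor
  rw [nu, Measure.smul_apply, smul_eq_mul, Measure.restrict_apply_univ]
  exact ENNReal.inv_mul_cancel vol_uB_pos.ne' vol_uB_ne_top

lemma nu_closedBall_le (z : E4) {δ : ℝ} (hδ : 0 ≤ δ) :
    nu (closedBall z δ) ≤ ENNReal.ofReal (δ ^ 4) := by
  have h1 : nu (closedBall z δ) ≤ (volume unitBall)⁻¹ * volume (closedBall z δ) := by
    rw [nu, Measure.smul_apply, smul_eq_mul,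
      Measure.restrict_apply measurableSet_closedBall]
    exact mul_le_mul_right (measure_mono inter_subset_left) _
  have h2 : volume (closedBall z δ)
      = ENNReal.ofReal (δ ^ Module.finrank ℝ E4) * volume (ball (0 : E4) 1) :=
    Measure.addHaar_closedBall _ z hδ
  rw [h2, finrank_euclideanSpace_fin] at h1
  calc nu (closedBall z δ) ≤ (volume unitBall)⁻¹ * (ENNReal.ofReal (δ ^ 4) * volume (ball (0:E4) 1)) := h1
    _ = ENNReal.ofReal (δ ^ 4) * ((volume unitBall)⁻¹ * volume unitBall) := by
        rw [unitBall]; ring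
    _ = ENNReal.ofReal (δ ^ 4) := by
        rw [ENNReal.inv_mul_cancel vol_uB_pos.ne' vol_uB_ne_top, mul_one]

def Hker (δ : ℝ) : E4 × E4 → ℝ≥0∞ := fun p => if ‖p.1 - p.2‖ ≤ δ then 1 else 0

lemma Hker_meas (δ : ℝ) : Measurable (Hker δ) := by
  have hs : MeasurableSet {p : E4 × E4 | ‖p.1 - p.2‖ ≤ δ} :=
    (isClosed_le ((continuous_fst.sub continuous_snd).norm) continuous_const).measurableSet
  unfold Hker
  exact Measurable.ite hs measurable_const measurable_const

lemma Hker_lint_left {δ : ℝ} (hδ : 0 ≤ δ) (y : E4) :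
    ∫⁻ x, Hker δ (x, y) ∂nu ≤ ENNReal.ofReal (δ ^ 4) := by
  have h : (fun x => Hker δ (x, y)) = (closedBall y δ).indicator (1 : E4 → ℝ≥0∞) := by
    funext x
    by_cases hx : ‖x - y‖ ≤ δ <;>
      simp [Hker, Set.indicator_apply, mem_closedBall, dist_eq_norm, hx]
  rw [h, lintegral_indicator_one measurableSet_closedBall]
  exact nu_closedBall_le y hδ

lemma Hker_lint_right {δ : ℝ} (hδ : 0 ≤ δ) (x : E4) :
    ∫⁻ y, Hker δ (x, y) ∂nu ≤ ENNReal.ofReal (δ ^ 4) := by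
  have h : (fun y => Hker δ (x, y)) = (closedBall x δ).indicator (1 : E4 → ℝ≥0∞) := by
    funext y
    by_cases hx : ‖x - y‖ ≤ δ <;>
      simp [Hker, Set.indicator_apply, mem_closedBall, dist_eq_norm, norm_sub_rev, hx]
  rw [h, lintegral_indicator_one measurableSet_closedBall]
  exact nu_closedBall_le x hδ

lemma key_bound {δ q : ℝ} (hδ : 0 < δ) (hq1 : 4/3 < q) (hq2 : q ≤ 3/2)
    (F G : E4 → ℝ≥0∞) (hFm : Measurable F) (hGm : Measurable G)
    (hFt : ∀ x, F x ≠ ⊤) (hGt : ∀ y, G y ≠ ⊤)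
    (hP : (∫⁻ x, F x ^ q ∂nu) ≠ ⊤) (hQ : (∫⁻ y, G y ^ (2:ℝ) ∂nu) ≠ ⊤) :
    (∫⁻ x, ∫⁻ y, Hker δ (x, y) * (F x * G y) ∂nu ∂nu) ≤
      ENNReal.ofReal (δ ^ 4) ^ (3/2 - 1/q)
        * (((∫⁻ x, F x ^ q ∂nu) + 1) ^ (1/q)
        * ((∫⁻ y, G y ^ (2:ℝ) ∂nu) + 1) ^ (1/2 : ℝ)) := by
  have hq0 : 0 < q := by linarith
  have h1q2 : (1:ℝ)/2 < 1/q := by rw [div_lt_div_iff₀ (by norm_num) hq0]; linarith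
  have h1q1 : 1/q < 1 := by rw [div_lt_one hq0]; linarith
  have ha : (0:ℝ) < 1/q - 1/2 := by linarith
  have hb : (0:ℝ) < 1 - 1/q := by linarith
  set I0 := ∫⁻ x, F x ^ q ∂nu with hI0
  set I1 := ∫⁻ y, G y ^ (2:ℝ) ∂nu with hI1
  set d := ENNReal.ofReal (δ ^ 4) with hd
  have hd0 : d ≠ 0 := (ENNReal.ofReal_pos.mpr (by positivity)).ne'
  have hdt : d ≠ ⊤ := ENNReal.ofReal_ne_top
  have hX0 : I0 + 1 ≠ 0 := by simp
  have hXt : I0 + 1 ≠ ⊤ := by simp [hP]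
  have hY0 : I1 + 1 ≠ 0 := by simp
  have hYt : I1 + 1 ≠ ⊤ := by simp [hQ]
  -- the three Hölder factors
  set φ : Fin 3 → E4 × E4 → ℝ≥0∞ :=
    ![fun p => F p.1 ^ q * G p.2 ^ (2:ℝ),
      fun p => G p.2 ^ (2:ℝ) * Hker δ p,
      fun p => Hker δ p * F p.1 ^ q] with hφ
  set e : Fin 3 → ℝ := ![1/q - 1/2, 1 - 1/q, 1/2] with he
  have hφm : ∀ i ∈ Finset.univ, AEMeasurable (φ i) (nu.prod nu) := by
    intro i _
    fin_cases i <;> simp only [hφ, Matrix.cons_val_zero, Matrix.cons_val_one, Matrix.head_cons,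
      Matrix.cons_val_two, Matrix.tail_cons]
    · exact (((hFm.comp measurable_fst).pow_const q).mul
        ((hGm.comp measurable_snd).pow_const (2:ℝ))).aemeasurable
    · exact (((hGm.comp measurable_snd).pow_const (2:ℝ)).mul (Hker_meas δ)).aemeasurable
    · exact ((Hker_meas δ).mul ((hFm.comp measurable_fst).pow_const q)).aemeasurable
  have hsum : ∑ i, e i = 1 := by
    simp [he, Fin.sum_univ_three]
  have h2q : (2:ℝ)⁻¹ ≤ q⁻¹ := by simpa [one_div] using h1q2.le
  have h1q : q⁻¹ ≤ 1 := by simpa [one_div] using h1q1.le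
  have hpos : ∀ i ∈ Finset.univ, 0 ≤ e i := by
    intro i _
    fin_cases i <;> simp [he] <;> linarith
  have holder := ENNReal.lintegral_prod_norm_pow_le (μ := (nu.prod nu)) Finset.univ hφm hsum hpos
  -- pointwise identity
  have e1 : ∀ p : E4 × E4, Hker δ p * (F p.1 * G p.2) = ∏ i, (φ i p) ^ (e i) := by
    intro p
    rw [Fin.prod_univ_three]
    simp only [hφ, he, Matrix.cons_val_zero, Matrix.cons_val_one, Matrix.head_cons,
      Matrix.cons_val_two, Matrix.tail_cons]
    by_cases hp : ‖p.1 - p.2‖ ≤ δ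
    · have hH1 : Hker δ p = 1 := by simp [Hker, hp]
      rw [hH1]
      simp only [one_mul, mul_one]
      rw [ENNReal.mul_rpow_of_nonneg _ _ ha.le, ← ENNReal.rpow_mul, ← ENNReal.rpow_mul,
        ← ENNReal.rpow_mul, ← ENNReal.rpow_mul]
      have hF1 : F p.1 ^ (q * (1/q - 1/2)) * F p.1 ^ (q * (1/2 : ℝ)) = F p.1 := by
        rw [← ENNReal.rpow_add_of_nonneg _ _ (mul_nonneg hq0.le ha.le)
          (mul_nonneg hq0.le (by norm_num))]
        rw [show q * (1/q - 1/2) + q * (1/2 : ℝ) = 1 by field_simp; ring, ENNReal.rpow_one]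
      have hG1 : G p.2 ^ ((2:ℝ) * (1/q - 1/2)) * G p.2 ^ ((2:ℝ) * (1 - 1/q)) = G p.2 := by
        rw [← ENNReal.rpow_add_of_nonneg _ _ (mul_nonneg (by norm_num) ha.le)
          (mul_nonneg (by norm_num) hb.le)]
        rw [show (2:ℝ) * (1/q - 1/2) + (2:ℝ) * (1 - 1/q) = 1 by ring, ENNReal.rpow_one]
      calc F p.1 * G p.2
          = (F p.1 ^ (q * (1/q - 1/2)) * F p.1 ^ (q * (1/2:ℝ)))
            * (G p.2 ^ ((2:ℝ) * (1/q - 1/2)) * G p.2 ^ ((2:ℝ) * (1 - 1/q))) := by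
            rw [hF1, hG1]
        _ = F p.1 ^ (q * (1/q - 1/2)) * G p.2 ^ ((2:ℝ) * (1/q - 1/2))
            * (G p.2 ^ ((2:ℝ) * (1 - 1/q)) * F p.1 ^ (q * (1/2:ℝ))) := by
            simp only [mul_comm, mul_assoc, mul_left_comm]
        _ = F p.1 ^ (q * (1/q - 1/2)) * G p.2 ^ ((2:ℝ) * (1/q - 1/2))
            * G p.2 ^ ((2:ℝ) * (1 - 1/q)) * F p.1 ^ (q * (1/2:ℝ)) := (mul_assoc _ _ _).symm
    · have hH0 : Hker δ p = 0 := by simp [Hker, hp]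
      rw [hH0]
      simp [ENNReal.zero_rpow_of_pos hb, ENNReal.zero_rpow_of_pos (by norm_num : (0:ℝ) < 1/2)]
  -- move to the product measure
  have hHFGm : Measurable fun p : E4 × E4 => Hker δ p * (F p.1 * G p.2) :=
    (Hker_meas δ).mul ((hFm.comp measurable_fst).mul (hGm.comp measurable_snd))
  have step1 : (∫⁻ x, ∫⁻ y, Hker δ (x, y) * (F x * G y) ∂nu ∂nu)
      = ∫⁻ p, Hker δ p * (F p.1 * G p.2) ∂(nu.prod nu) :=
    (lintegral_prod _ hHFGm.aemeasurable).symm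
  -- the three integrals
  have hJ0 : ∫⁻ p, F p.1 ^ q * G p.2 ^ (2:ℝ) ∂(nu.prod nu) = I0 * I1 :=
    lintegral_prod_mul (hFm.pow_const q).aemeasurable (hGm.pow_const (2:ℝ)).aemeasurable
  have hJ1 : ∫⁻ p, G p.2 ^ (2:ℝ) * Hker δ p ∂(nu.prod nu) ≤ I1 * d := by
    rw [lintegral_prod_symm (fun p : E4 × E4 => G p.2 ^ (2:ℝ) * Hker δ p)
      (show Measurable fun p : E4 × E4 => G p.2 ^ (2:ℝ) * Hker δ p from
        ((hGm.comp measurable_snd).pow_const (2:ℝ)).mul (Hker_meas δ)).aemeasurable]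
    calc ∫⁻ y, ∫⁻ x, G y ^ (2:ℝ) * Hker δ (x, y) ∂nu ∂nu
        = ∫⁻ y, G y ^ (2:ℝ) * ∫⁻ x, Hker δ (x, y) ∂nu ∂nu := by
          congr 1; funext y
          exact lintegral_const_mul' _ _
            (ENNReal.rpow_ne_top_of_nonneg (by norm_num) (hGt y))
      _ ≤ ∫⁻ y, G y ^ (2:ℝ) * d ∂nu :=
          lintegral_mono fun y => mul_le_mul_right (Hker_lint_left hδ.le y) _
      _ = I1 * d := lintegral_mul_const' _ _ hdt
  have hJ2 : ∫⁻ p, Hker δ p * F p.1 ^ q ∂(nu.prod nu) ≤ I0 * d := by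
    rw [lintegral_prod (fun p : E4 × E4 => Hker δ p * F p.1 ^ q)
      (show Measurable fun p : E4 × E4 => Hker δ p * F p.1 ^ q from
        (Hker_meas δ).mul ((hFm.comp measurable_fst).pow_const q)).aemeasurable]
    calc ∫⁻ x, ∫⁻ y, Hker δ (x, y) * F x ^ q ∂nu ∂nu
        = ∫⁻ x, F x ^ q * ∫⁻ y, Hker δ (x, y) ∂nu ∂nu := by
          congr 1; funext x
          rw [show (fun y => Hker δ (x, y) * F x ^ q) = fun y => F x ^ q * Hker δ (x, y) from
            funext fun y => mul_comm _ _]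
          exact lintegral_const_mul' _ _
            (ENNReal.rpow_ne_top_of_nonneg hq0.le (hFt x))
      _ ≤ ∫⁻ x, F x ^ q * d ∂nu :=
          lintegral_mono fun x => mul_le_mul_right (Hker_lint_right hδ.le x) _
      _ = I0 * d := lintegral_mul_const' _ _ hdt
  -- combine
  calc (∫⁻ x, ∫⁻ y, Hker δ (x, y) * (F x * G y) ∂nu ∂nu)
      = ∫⁻ p, ∏ i, (φ i p) ^ (e i) ∂(nu.prod nu) := by rw [step1]; exact lintegral_congr e1
    _ ≤ ∏ i, (∫⁻ p, φ i p ∂(nu.prod nu)) ^ (e i) := holder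
    _ = (∫⁻ p, F p.1 ^ q * G p.2 ^ (2:ℝ) ∂(nu.prod nu)) ^ (1/q - 1/2)
        * ((∫⁻ p, G p.2 ^ (2:ℝ) * Hker δ p ∂(nu.prod nu)) ^ (1 - 1/q)
        * (∫⁻ p, Hker δ p * F p.1 ^ q ∂(nu.prod nu)) ^ (1/2 : ℝ)) := by
        rw [Fin.prod_univ_three]
        simp only [hφ, he, Matrix.cons_val_zero, Matrix.cons_val_one, Matrix.head_cons,
          Matrix.cons_val_two, Matrix.tail_cons]
        rw [mul_assoc]
    _ ≤ ((I0 + 1) * (I1 + 1)) ^ (1/q - 1/2)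
        * (((I1 + 1) * d) ^ (1 - 1/q) * (((I0 + 1) * d) ^ (1/2 : ℝ))) := by
        rw [hJ0]
        have b0 : I0 * I1 ≤ (I0 + 1) * (I1 + 1) :=
          mul_le_mul' le_self_add le_self_add
        have b1 : (∫⁻ p, G p.2 ^ (2:ℝ) * Hker δ p ∂(nu.prod nu)) ≤ (I1 + 1) * d :=
          hJ1.trans (mul_le_mul_left le_self_add _)
        have b2 : (∫⁻ p, Hker δ p * F p.1 ^ q ∂(nu.prod nu)) ≤ (I0 + 1) * d :=
          hJ2.trans (mul_le_mul_left le_self_add _)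
        exact mul_le_mul' (ENNReal.rpow_le_rpow b0 ha.le)
          (mul_le_mul' (ENNReal.rpow_le_rpow b1 hb.le)
            (ENNReal.rpow_le_rpow b2 (by norm_num)))
    _ = d ^ (3/2 - 1/q) * (((I0 + 1)) ^ (1/q) * ((I1 + 1)) ^ (1/2 : ℝ)) := by
        rw [ENNReal.mul_rpow_of_nonneg _ _ ha.le,
          ENNReal.mul_rpow_of_nonneg _ _ hb.le,
          ENNReal.mul_rpow_of_nonneg _ _ (by norm_num : (0:ℝ) ≤ 1/2)]
        have hX : (I0 + 1) ^ (1/q - 1/2) * (I0 + 1) ^ (1/2:ℝ) = (I0 + 1) ^ (1/q) := by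
          rw [← ENNReal.rpow_add _ _ hX0 hXt]; norm_num
        have hY : (I1 + 1) ^ (1/q - 1/2) * (I1 + 1) ^ (1 - 1/q) = (I1 + 1) ^ (1/2:ℝ) := by
          rw [← ENNReal.rpow_add _ _ hY0 hYt]; congr 1; ring
        have hD : d ^ (1 - 1/q) * d ^ (1/2:ℝ) = d ^ (3/2 - 1/q) := by
          rw [← ENNReal.rpow_add _ _ hd0 hdt]; congr 1; ring
        calc (I0 + 1) ^ (1/q - 1/2) * (I1 + 1) ^ (1/q - 1/2)
              * ((I1 + 1) ^ (1 - 1/q) * d ^ (1 - 1/q)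
                * ((I0 + 1) ^ (1/2:ℝ) * d ^ (1/2:ℝ)))
            = (d ^ (1 - 1/q) * d ^ (1/2:ℝ))
              * (((I0 + 1) ^ (1/q - 1/2) * (I0 + 1) ^ (1/2:ℝ))
                * ((I1 + 1) ^ (1/q - 1/2) * (I1 + 1) ^ (1 - 1/q))) := by
              simp only [mul_comm, mul_assoc, mul_left_comm]
          _ = d ^ (3/2 - 1/q) * ((I0 + 1) ^ (1/q) * (I1 + 1) ^ (1/2:ℝ)) := by
              rw [hX, hY, hD]


/-- if `‖K_λ‖_∞ ≤ C|λ|³` and `K_λ(x,y) = 0` for `‖x-y‖ > A|λ|⁻¹`, then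
`∫∫ K_λ(x,y) f₁(x) f₂(y) → 0` as `|λ| → ∞`, for every `f₁ ∈ L^q(𝔹)` with `q > 4/3` and
every `f₂ ∈ L²(𝔹)`. -/
theorem stmt2 (A C : ℝ) (hA : 0 < A) (hC : 0 < C)
    (K : ℂ → E4 → E4 → ℝ)
    (hmeas : ∀ lam : ℂ, Measurable fun p : E4 × E4 => K lam p.1 p.2)
    (hbound : ∀ lam : ℂ, 1 ≤ ‖lam‖ → ∀ x y : E4, |K lam x y| ≤ C * ‖lam‖ ^ 3)
    (hsupp : ∀ lam : ℂ, 1 ≤ ‖lam‖ → ∀ x y : E4, A * ‖lam‖⁻¹ < ‖x - y‖ → K lam x y = 0) :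
    ∀ q : ℝ, 4 / 3 < q →
      ∀ f₁ f₂ : E4 → ℝ, MemLp f₁ (ENNReal.ofReal q) nu → MemLp f₂ 2 nu →
        Tendsto (fun lam : ℂ => ∫ x, ∫ y, K lam x y * f₁ x * f₂ y ∂nu ∂nu)
          normAtTop (𝓝 0) := by
  
  intro q0 hq00 f₁ f₂ hf₁ hf₂
  -- measurable representatives
  set g₁ := (hf₁.1.aemeasurable).mk f₁ with hg₁def
  have hg₁m : Measurable g₁ := hf₁.1.aemeasurable.measurable_mk
  have hmk₁ : f₁ =ᵐ[nu] g₁ := hf₁.1.aemeasurable.ae_eq_mk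
  set g₂ := (hf₂.1.aemeasurable).mk f₂ with hg₂def
  have hg₂m : Measurable g₂ := hf₂.1.aemeasurable.measurable_mk
  have hmk₂ : f₂ =ᵐ[nu] g₂ := hf₂.1.aemeasurable.ae_eq_mk
  have hEq : ∀ lam : ℂ, (∫ x, ∫ y, K lam x y * f₁ x * f₂ y ∂nu ∂nu)
      = ∫ x, ∫ y, K lam x y * g₁ x * g₂ y ∂nu ∂nu := by
    intro lam
    apply integral_congr_ae
    filter_upwards [hmk₁] with x hx
    apply integral_congr_ae
    filter_upwards [hmk₂] with y hy
    rw [hx, hy]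
  rw [show (fun lam : ℂ => ∫ x, ∫ y, K lam x y * f₁ x * f₂ y ∂nu ∂nu)
      = fun lam : ℂ => ∫ x, ∫ y, K lam x y * g₁ x * g₂ y ∂nu ∂nu from funext hEq]
  have hg₁L : MemLp g₁ (ENNReal.ofReal q0) nu := hf₁.ae_eq hmk₁
  have hg₂L : MemLp g₂ 2 nu := hf₂.ae_eq hmk₂
  -- reduce the exponent
  set q := min q0 (3/2 : ℝ) with hqdef
  have hq1 : 4/3 < q := lt_min hq00 (by norm_num)
  have hq2 : q ≤ 3/2 := min_le_right _ _
  have hq0' : (0:ℝ) < q := by linarith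
  have hgq : MemLp g₁ (ENNReal.ofReal q) nu :=
    hg₁L.mono_exponent (ENNReal.ofReal_le_ofReal (min_le_left _ _))
  -- finiteness of the lintegrals
  have hP : (∫⁻ x, (‖g₁ x‖₊ : ℝ≥0∞) ^ q ∂nu) ≠ ⊤ := by
    have h2 := hgq.2
    rw [eLpNorm_eq_lintegral_rpow_enorm_toReal
      (ne_of_gt (ENNReal.ofReal_pos.mpr hq0')) ENNReal.ofReal_ne_top] at h2
    rw [ENNReal.toReal_ofReal hq0'.le] at h2
    exact ((ENNReal.rpow_lt_top_iff_of_pos (by positivity)).mp h2).ne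
  have hQ : (∫⁻ y, (‖g₂ y‖₊ : ℝ≥0∞) ^ (2:ℝ) ∂nu) ≠ ⊤ := by
    have h2 := hg₂L.2
    rw [eLpNorm_eq_lintegral_rpow_enorm_toReal (by norm_num) (by norm_num),
      ENNReal.toReal_ofNat] at h2
    exact ((ENNReal.rpow_lt_top_iff_of_pos (by norm_num)).mp h2).ne
  set P := ∫⁻ x, (‖g₁ x‖₊ : ℝ≥0∞) ^ q ∂nu with hPdef
  set Q := ∫⁻ y, (‖g₂ y‖₊ : ℝ≥0∞) ^ (2:ℝ) ∂nu with hQdef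
  set W : ℝ≥0∞ := (P + 1) ^ (1/q) * (Q + 1) ^ (1/2:ℝ) with hWdef
  have hWt : W ≠ ⊤ := by
    rw [hWdef]
    exact ENNReal.mul_ne_top
      (ENNReal.rpow_ne_top_of_nonneg (by positivity) (by simp [hP]))
      (ENNReal.rpow_ne_top_of_nonneg (by norm_num) (by simp [hQ]))
  set r1 : ℝ := 3/2 - 1/q with hr1
  have h1q34 : 1/q < 3/4 := by rw [div_lt_div_iff₀ hq0' (by norm_num)]; linarith
  have hr1pos : 0 < r1 := by rw [hr1]; linarith
  set sE : ℝ := 3 - 4 * r1 with hsE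
  have hsneg : sE < 0 := by
    have : sE = 4 * (1/q) - 3 := by rw [hsE, hr1]; ring
    rw [this]; linarith
  set Dr : ℝ := C * A ^ (4 * r1) * W.toReal with hDr
  have htendnorm : Tendsto (fun lam : ℂ => ‖lam‖) normAtTop atTop := tendsto_comap
  have hev : ∀ᶠ lam : ℂ in normAtTop, 1 ≤ ‖lam‖ := htendnorm.eventually_ge_atTop 1
  refine squeeze_zero_norm' (a := fun lam : ℂ => Dr * ‖lam‖ ^ sE) ?_ ?_
  · -- the eventual bound
    filter_upwards [hev] with lam h1
    have ht0 : (0:ℝ) < ‖lam‖ := lt_of_lt_of_le one_pos h1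
    set t := ‖lam‖ with htdef
    have hδpos : (0:ℝ) < A * t⁻¹ := by positivity
    -- pointwise kernel bound
    have hpt : ∀ x y : E4, (‖K lam x y * g₁ x * g₂ y‖₊ : ℝ≥0∞) ≤
        ENNReal.ofReal (C * t ^ 3) *
          (Hker (A * t⁻¹) (x, y) * ((‖g₁ x‖₊ : ℝ≥0∞) * (‖g₂ y‖₊ : ℝ≥0∞))) := by
      intro x y
      have hsplit : (‖K lam x y * g₁ x * g₂ y‖₊ : ℝ≥0∞)
          = (‖K lam x y‖₊ : ℝ≥0∞) * ((‖g₁ x‖₊ : ℝ≥0∞) * (‖g₂ y‖₊ : ℝ≥0∞)) := by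
        simp [nnnorm_mul, ENNReal.coe_mul, mul_assoc]
      rw [hsplit]
      rcases le_or_gt ‖x - y‖ (A * t⁻¹) with h | h
      · have hH1 : Hker (A * t⁻¹) (x, y) = 1 := by simp [Hker, h]
        rw [hH1, one_mul]
        refine mul_le_mul_left ?_ _
        rw [← enorm_eq_nnnorm, Real.enorm_eq_ofReal_abs]
        exact ENNReal.ofReal_le_ofReal (hbound lam h1 x y)
      · rw [hsupp lam h1 x y h]; simp
    -- chain of bounds
    have hL1 : (‖∫ x, ∫ y, K lam x y * g₁ x * g₂ y ∂nu ∂nu‖₊ : ℝ≥0∞)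
        ≤ ∫⁻ x, ∫⁻ y, (‖K lam x y * g₁ x * g₂ y‖₊ : ℝ≥0∞) ∂nu ∂nu :=
      (enorm_integral_le_lintegral_enorm _).trans
        (lintegral_mono fun x => enorm_integral_le_lintegral_enorm _)
    have hL2 : (∫⁻ x, ∫⁻ y, (‖K lam x y * g₁ x * g₂ y‖₊ : ℝ≥0∞) ∂nu ∂nu)
        ≤ ENNReal.ofReal (C * t ^ 3) *
          ∫⁻ x, ∫⁻ y, Hker (A * t⁻¹) (x, y)
            * ((‖g₁ x‖₊ : ℝ≥0∞) * (‖g₂ y‖₊ : ℝ≥0∞)) ∂nu ∂nu := by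
      calc (∫⁻ x, ∫⁻ y, (‖K lam x y * g₁ x * g₂ y‖₊ : ℝ≥0∞) ∂nu ∂nu)
          ≤ ∫⁻ x, ∫⁻ y, ENNReal.ofReal (C * t ^ 3) *
              (Hker (A * t⁻¹) (x, y) * ((‖g₁ x‖₊ : ℝ≥0∞) * (‖g₂ y‖₊ : ℝ≥0∞))) ∂nu ∂nu :=
            lintegral_mono fun x => lintegral_mono fun y => hpt x y
        _ = ∫⁻ x, ENNReal.ofReal (C * t ^ 3) * ∫⁻ y, Hker (A * t⁻¹) (x, y)
              * ((‖g₁ x‖₊ : ℝ≥0∞) * (‖g₂ y‖₊ : ℝ≥0∞)) ∂nu ∂nu := by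
            congr 1; funext x
            exact lintegral_const_mul' _ _ ENNReal.ofReal_ne_top
        _ = _ := lintegral_const_mul' _ _ ENNReal.ofReal_ne_top
    have hkey := key_bound (δ := A * t⁻¹) (q := q) hδpos hq1 hq2
      (fun x => (‖g₁ x‖₊ : ℝ≥0∞)) (fun y => (‖g₂ y‖₊ : ℝ≥0∞))
      hg₁m.nnnorm.coe_nnreal_ennreal hg₂m.nnnorm.coe_nnreal_ennreal
      (fun x => ENNReal.coe_ne_top) (fun y => ENNReal.coe_ne_top) hP hQ
    rw [← hPdef, ← hQdef, ← hWdef, ← hr1] at hkey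
    have hfinal : (‖∫ x, ∫ y, K lam x y * g₁ x * g₂ y ∂nu ∂nu‖₊ : ℝ≥0∞)
        ≤ ENNReal.ofReal (C * t ^ 3) * (ENNReal.ofReal ((A * t⁻¹) ^ 4) ^ r1 * W) :=
      hL1.trans (hL2.trans (mul_le_mul_right hkey _))
    -- arithmetic on the bound
    have harith : ENNReal.ofReal (C * t ^ 3) * (ENNReal.ofReal ((A * t⁻¹) ^ 4) ^ r1 * W)
        = ENNReal.ofReal (C * A ^ (4 * r1) * t ^ sE) * W := by
      rw [ENNReal.ofReal_rpow_of_nonneg (by positivity) hr1pos.le]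
      rw [← mul_assoc, ← ENNReal.ofReal_mul (by positivity)]
      congr 2
      have e1 : ((A * t⁻¹) ^ 4 : ℝ) ^ r1 = A ^ (4 * r1) * t ^ (-(4 * r1)) := by
        rw [show ((A * t⁻¹) ^ 4 : ℝ) = (A * t⁻¹) ^ ((4:ℕ):ℝ) from (Real.rpow_natCast _ 4).symm]
        rw [← Real.rpow_mul (by positivity)]
        rw [Real.mul_rpow hA.le (by positivity), Real.inv_rpow ht0.le,
          ← Real.rpow_neg ht0.le]
        norm_num
      rw [e1]
      have e2 : (t:ℝ) ^ (3:ℕ) = t ^ ((3:ℕ):ℝ) := (Real.rpow_natCast _ 3).symm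
      rw [e2]
      have e3 : t ^ (((3:ℕ)):ℝ) * t ^ (-(4 * r1)) = t ^ sE := by
        rw [← Real.rpow_add ht0]
        have hexp : ((3:ℕ):ℝ) + -(4 * r1) = sE := by rw [hsE]; push_cast; ring
        rw [hexp]
      calc C * t ^ (((3:ℕ)):ℝ) * (A ^ (4 * r1) * t ^ (-(4 * r1)))
          = C * A ^ (4 * r1) * (t ^ (((3:ℕ)):ℝ) * t ^ (-(4 * r1))) := by ring
        _ = C * A ^ (4 * r1) * t ^ sE := by rw [e3]
    rw [harith] at hfinal
    -- pass to real numbers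
    have hne : ENNReal.ofReal (C * A ^ (4 * r1) * t ^ sE) * W ≠ ⊤ :=
      ENNReal.mul_ne_top ENNReal.ofReal_ne_top hWt
    have := ENNReal.toReal_mono hne hfinal
    rw [ENNReal.coe_toReal, coe_nnnorm] at this
    rw [ENNReal.toReal_mul, ENNReal.toReal_ofReal (by positivity)] at this
    calc ‖∫ x, ∫ y, K lam x y * g₁ x * g₂ y ∂nu ∂nu‖ ≤ C * A ^ (4 * r1) * t ^ sE * W.toReal :=
        this
      _ = Dr * t ^ sE := by rw [hDr]; ring
  · -- the bound tends to zero
    have h1 : Tendsto (fun x : ℝ => x ^ sE) atTop (𝓝 0) := by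
      have := tendsto_rpow_neg_atTop (y := -sE) (by linarith)
      simpa [neg_neg] using this
    have h2 := (h1.comp htendnorm).const_mul (b := Dr)
    simpa using h2
end
end

section
/- Let c > 0 be fixed and let ζ₀ be a point in the open sector S. Then there is a constant c_{ζ₀} > 0, depending only on η, c and ζ₀, such that ∫₀^∞ H(l ζ₀) dl ≤ c_{ζ₀} for every c-admissible positive harmonic function H on S'. -/
open MeasureTheory Filter Set
open scoped ENNReal Topology

noncomputable section

/-- `η = a + ib`. -/
def etaC (a b : ℝ) : ℂ := (a : ℂ) + (b : ℂ) * Complex.I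

/-- The open sector `S = {u+iv : v > 0, bu + av > 0}`. -/
def sectorS (a b : ℝ) : Set ℂ := {z : ℂ | 0 < z.im ∧ 0 < b * z.re + a * z.im}

/-- The larger sector `S' = {u+iv : v > -log 3, bu + av > -log 3}`. -/
def sectorS' (a b : ℝ) : Set ℂ :=
  {z : ℂ | -Real.log 3 < z.im ∧ -Real.log 3 < b * z.re + a * z.im}

/-- A real-valued function on `ℂ` is harmonic on a set: it is `C²` there and its Laplacian
(the sum of the second derivatives in the directions `1` and `i`) vanishes. -/
def HarmonicOnSet (f : ℂ → ℝ) (U : Set ℂ) : Prop :=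
  ContDiffOn ℝ 2 f U ∧
    ∀ z ∈ U, (iteratedFDeriv ℝ 2 f z) ![1, 1] + (iteratedFDeriv ℝ 2 f z) ![Complex.I, Complex.I] = 0

/-- A positive harmonic function on the sector `S'`. -/
def PosHarmonic (a b : ℝ) (H : ℂ → ℝ) : Prop :=
  (∀ z ∈ sectorS' a b, 0 < H z) ∧ HarmonicOnSet H (sectorS' a b)

/-- The exponent `γ = π/θ₀`, where `θ₀ = arg(-η̄) ∈ (0,π)` is the opening angle of `S`. -/
def gammaExp (a b : ℝ) : ℝ := Real.pi / Complex.arg (((-a : ℝ) : ℂ) + (b : ℂ) * Complex.I)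

/-- `c`-admissibility of a function `H` on `S'`: there is `H̃` with `H̃ ∘ Φ = H` on `S`
(where `Φ(ζ) = ζ^γ`), continuous on the closed upper half-plane, bounded by `c` on `ℝ`,
with `∫_ℝ H̃(t)|t|^{-1+1/γ} dt ≤ c`, and satisfying the Poisson formula. -/
def Admissible (a b c : ℝ) (H : ℂ → ℝ) : Prop :=
  ∃ Ht : ℂ → ℝ,
    ContinuousOn Ht {z : ℂ | 0 ≤ z.im} ∧
    (∀ ζ ∈ sectorS a b, Ht (ζ ^ ((gammaExp a b : ℝ) : ℂ)) = H ζ) ∧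
    (∀ t : ℝ, Ht (t : ℂ) ≤ c) ∧
    Integrable (fun t : ℝ => Ht (t : ℂ) * |t| ^ (-1 + 1 / gammaExp a b)) ∧
    (∫ t : ℝ, Ht (t : ℂ) * |t| ^ (-1 + 1 / gammaExp a b)) ≤ c ∧
    (∀ U V : ℝ, 0 < V →
      Ht ((U : ℂ) + (V : ℂ) * Complex.I) =
        (1 / Real.pi) * ∫ t : ℝ, Ht (t : ℂ) * (V / (V ^ 2 + (t - U) ^ 2)))

/-- The point `-η̄ b⁻¹ s + l` on the half-line `Λ_{1,s}`. -/
def lam1pt (a b s l : ℝ) : ℂ :=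
  -(starRingEnd ℂ (etaC a b)) * ((s / b : ℝ) : ℂ) + (l : ℂ)

/-- The point `b⁻¹ s - η̄ l` on the half-line `Λ_{2,s}`. -/
def lam2pt (a b s l : ℝ) : ℂ :=
  ((s / b : ℝ) : ℂ) - (starRingEnd ℂ (etaC a b)) * (l : ℂ)



lemma arg_bounds_of_im_pos {z : ℂ} (h : 0 < z.im) : 0 < z.arg ∧ z.arg < Real.pi := by
  have hz : z ≠ 0 := by
    intro h0; rw [h0] at h; simp at h
  have hsin : 0 < Real.sin z.arg := by
    rw [Complex.sin_arg]
    exact div_pos h ((norm_pos_iff.mpr hz))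
  constructor
  · by_contra hle
    push_neg at hle
    exact absurd (Real.sin_nonpos_of_nonpos_of_neg_pi_le hle (Complex.neg_pi_lt_arg z).le)
      (not_le.mpr hsin)
  · rcases lt_or_eq_of_le (Complex.arg_le_pi z) with h | h
    · exact h
    · rw [h] at hsin; simp at hsin

lemma cpow_polar {x s : ℝ} (hx : 0 < x) (hs : s ∈ Set.Ioc (-Real.pi) Real.pi) (g : ℝ) :
    ((x : ℂ) * Complex.exp ((s : ℂ) * Complex.I)) ^ (g : ℂ) =
      ((x ^ g : ℝ) : ℂ) * Complex.exp (((g * s : ℝ) : ℂ) * Complex.I) := by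
  have hxne : (x : ℂ) ≠ 0 := Complex.ofReal_ne_zero.mpr hx.ne'
  have hzne : (x : ℂ) * Complex.exp ((s : ℂ) * Complex.I) ≠ 0 :=
    mul_ne_zero hxne (Complex.exp_ne_zero _)
  have harg : Complex.arg ((x : ℂ) * Complex.exp ((s : ℂ) * Complex.I)) = s := by
    rw [Complex.exp_mul_I, Complex.arg_mul_cos_add_sin_mul_I hx hs]
  have habs : ‖(x : ℂ) * Complex.exp ((s : ℂ) * Complex.I)‖ = x := by
    rw [norm_mul, Complex.norm_exp_ofReal_mul_I, Complex.norm_real, Real.norm_eq_abs, abs_of_pos hx, mul_one]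
  rw [Complex.cpow_def_of_ne_zero hzne, Complex.log, habs, harg]
  rw [Real.rpow_def_of_pos hx, Complex.ofReal_exp]
  rw [← Complex.exp_add]
  congr 1
  push_cast
  ring

def mC (a b : ℝ) : ℂ := ((-a : ℝ) : ℂ) + (b : ℂ) * Complex.I

def theta0 (a b : ℝ) : ℝ := Complex.arg (mC a b)

lemma gammaExp_eq (a b : ℝ) : gammaExp a b = Real.pi / theta0 a b := rfl

lemma mC_im (a b : ℝ) : (mC a b).im = b := by simp [mC]

lemma mC_re (a b : ℝ) : (mC a b).re = -a := by simp [mC]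

lemma mC_ne (a b : ℝ) (hb : 0 < b) : mC a b ≠ 0 := by
  intro h
  have := mC_im a b
  rw [h] at this
  simp at this
  exact hb.ne' this.symm

lemma theta0_bounds (a b : ℝ) (hb : 0 < b) : 0 < theta0 a b ∧ theta0 a b < Real.pi := by
  have : 0 < (mC a b).im := by rw [mC_im]; exact hb
  exact arg_bounds_of_im_pos this

lemma key_trig (a b : ℝ) (hb : 0 < b) (s : ℝ) :
    b * Real.cos s + a * Real.sin s = ‖mC a b‖ * Real.sin (theta0 a b - s) := by
  have hmne := mC_ne a b hb
  have hρ : 0 < ‖mC a b‖ := (norm_pos_iff.mpr hmne)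
  have hcos : Real.cos (theta0 a b) = -a / ‖mC a b‖ := by
    have := Complex.cos_arg hmne
    rwa [mC_re] at this
  have hsin : Real.sin (theta0 a b) = b / ‖mC a b‖ := by
    have := Complex.sin_arg (mC a b)
    rwa [mC_im] at this
  rw [Real.sin_sub, hcos, hsin]
  field_simp
  ring

lemma arg_lt_of_mem_sector (a b : ℝ) (hb : 0 < b) {z : ℂ} (hz : z ∈ sectorS a b) :
    0 < z.arg ∧ z.arg < theta0 a b := by
  obtain ⟨him, hlin⟩ := hz
  have h1 := arg_bounds_of_im_pos him
  refine ⟨h1.1, ?_⟩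
  have hzne : z ≠ 0 := by intro h; rw [h] at him; simp at him
  have hr : 0 < ‖z‖ := (norm_pos_iff.mpr hzne)
  have hρ : 0 < ‖mC a b‖ := (norm_pos_iff.mpr (mC_ne a b hb))
  have hre : z.re = ‖z‖ * Real.cos z.arg := by
    rw [Complex.cos_arg hzne]; field_simp
  have him' : z.im = ‖z‖ * Real.sin z.arg := by
    rw [Complex.sin_arg]; field_simp
  have key : 0 < ‖z‖ * (‖mC a b‖ * Real.sin (theta0 a b - z.arg)) := by
    rw [← key_trig a b hb]
    rw [hre, him'] at hlin
    nlinarith [hlin]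
  have hsinpos : 0 < Real.sin (theta0 a b - z.arg) := by
    by_contra hle
    push_neg at hle
    nlinarith [key, mul_nonneg hr.le hρ.le]
  by_contra hle
  push_neg at hle
  have harg_le := Complex.arg_le_pi z
  have : Real.sin (theta0 a b - z.arg) ≤ 0 := by
    apply Real.sin_nonpos_of_nonpos_of_neg_pi_le (by linarith)
    have := (theta0_bounds a b hb).1
    linarith
  linarith

lemma mem_sector_of (a b : ℝ) (hb : 0 < b) {x s : ℝ} (hx : 0 < x) (hs0 : 0 < s)
    (hsθ : s < theta0 a b) :
    ((x : ℂ) * Complex.exp ((s : ℂ) * Complex.I)) ∈ sectorS a b := by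
  have hθ := theta0_bounds a b hb
  have hρ : 0 < ‖mC a b‖ := (norm_pos_iff.mpr (mC_ne a b hb))
  have hre : ((x : ℂ) * Complex.exp ((s : ℂ) * Complex.I)).re = x * Real.cos s := by
    simp [Complex.mul_re, Complex.exp_ofReal_mul_I_re, Complex.exp_ofReal_mul_I_im]
  have him : ((x : ℂ) * Complex.exp ((s : ℂ) * Complex.I)).im = x * Real.sin s := by
    simp [Complex.mul_im, Complex.exp_ofReal_mul_I_re, Complex.exp_ofReal_mul_I_im]
  have hsins : 0 < Real.sin s := Real.sin_pos_of_pos_of_lt_pi hs0 (by linarith)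
  constructor
  · rw [him]; positivity
  · rw [hre, him]
    have h2 : b * (x * Real.cos s) + a * (x * Real.sin s) =
        x * (b * Real.cos s + a * Real.sin s) := by ring
    rw [h2, key_trig a b hb]
    have : 0 < Real.sin (theta0 a b - s) :=
      Real.sin_pos_of_pos_of_lt_pi (by linarith) (by linarith)
    positivity

lemma gamma_gt_one (a b : ℝ) (hb : 0 < b) : 1 < gammaExp a b := by
  have h := theta0_bounds a b hb
  rw [gammaExp_eq]
  rw [lt_div_iff₀ h.1]
  linarith

lemma gamma_mul_theta0 (a b : ℝ) (hb : 0 < b) : gammaExp a b * theta0 a b = Real.pi := by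
  have h := theta0_bounds a b hb
  rw [gammaExp_eq]
  exact div_mul_cancel₀ _ h.1.ne'

lemma sector_subset (a b : ℝ) : sectorS a b ⊆ sectorS' a b := by
  intro z hz
  have h3 : 0 < Real.log 3 := Real.log_pos (by norm_num)
  exact ⟨by have := hz.1; linarith,
    by have := hz.2; linarith⟩

lemma kernel_bound {γ p q M : ℝ} (hγ : 1 < γ) (hp : 0 < p) (hpM : p ≤ M) (hqM : |q| ≤ M)
    {t : ℝ} (ht : t ≠ 0) :
    (∫⁻ l in Ioi (0 : ℝ),
        ENNReal.ofReal (l ^ γ * p / ((l ^ γ * p) ^ 2 + (t - l ^ γ * q) ^ 2))) ≤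
      ENNReal.ofReal ((p / ((γ + 1) * M ^ 2) + 1 / (p * (γ - 1))) * (2 * M) ^ ((γ - 1) / γ) *
        |t| ^ (-1 + 1 / γ)) := by
  have hM : 0 < M := lt_of_lt_of_le hp hpM
  have hγ0 : 0 < γ := by linarith
  have hT0 : 0 < |t| := abs_pos.mpr ht
  obtain ⟨L, hL0, hLγ⟩ : ∃ L : ℝ, 0 < L ∧ L ^ γ = |t| / (2 * M) :=
    ⟨(|t| / (2 * M)) ^ γ⁻¹, Real.rpow_pos_of_pos (by positivity) _,
      Real.rpow_inv_rpow (by positivity) hγ0.ne'⟩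
  have hTL : |t| = 2 * M * L ^ γ := by rw [hLγ]; field_simp
  have hLγ0 : 0 < L ^ γ := Real.rpow_pos_of_pos hL0 _
  have hL1γnn : 0 ≤ L ^ (1 - γ) := Real.rpow_nonneg hL0.le _
  have hsplit : (Ioi (0 : ℝ)) = Ioc 0 L ∪ Ioi L := (Set.Ioc_union_Ioi_eq_Ioi hL0.le).symm
  rw [hsplit, lintegral_union measurableSet_Ioi Set.Ioc_disjoint_Ioi_same]
  -- first piece
  have hb1 : (∫⁻ l in Ioc (0 : ℝ) L,
        ENNReal.ofReal (l ^ γ * p / ((l ^ γ * p) ^ 2 + (t - l ^ γ * q) ^ 2))) ≤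
      ENNReal.ofReal (p / ((γ + 1) * M ^ 2) * L ^ (1 - γ)) := by
    have step1 : (∫⁻ l in Ioc (0 : ℝ) L,
        ENNReal.ofReal (l ^ γ * p / ((l ^ γ * p) ^ 2 + (t - l ^ γ * q) ^ 2))) ≤
        ∫⁻ l in Ioc (0 : ℝ) L, ENNReal.ofReal (4 * p / |t| ^ 2 * l ^ γ) := by
      apply setLIntegral_mono' measurableSet_Ioc
      intro l hl
      apply ENNReal.ofReal_le_ofReal
      have hl0 : 0 < l := hl.1
      have hlγ : 0 < l ^ γ := Real.rpow_pos_of_pos hl0 _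
      have h1 : l ^ γ ≤ |t| / (2 * M) := by
        rw [← hLγ]; exact Real.rpow_le_rpow hl0.le hl.2 hγ0.le
      have h2 : |l ^ γ * q| ≤ |t| / 2 := by
        rw [abs_mul, abs_of_pos hlγ]
        calc l ^ γ * |q| ≤ |t| / (2 * M) * M :=
              mul_le_mul h1 hqM (abs_nonneg q) (by positivity)
          _ = |t| / 2 := by field_simp
      have h3 : |t| / 2 ≤ |t - l ^ γ * q| := by
        have h4 := abs_sub_abs_le_abs_sub t (l ^ γ * q)
        linarith
      have h4 : (|t| / 2) ^ 2 ≤ (t - l ^ γ * q) ^ 2 := by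
        rw [← sq_abs (t - l ^ γ * q)]
        exact pow_le_pow_left₀ (by positivity) h3 2
      have h5 : (0:ℝ) < (|t| / 2) ^ 2 := by positivity
      calc l ^ γ * p / ((l ^ γ * p) ^ 2 + (t - l ^ γ * q) ^ 2) ≤
            l ^ γ * p / ((|t| / 2) ^ 2) := by
            apply div_le_div_of_nonneg_left (by positivity) h5
            nlinarith [sq_nonneg (l ^ γ * p)]
        _ = 4 * p / |t| ^ 2 * l ^ γ := by
            rw [div_pow]
            rw [sq_abs]
            field_simp
            ring
    refine step1.trans ?_
    have hInt : IntegrableOn (fun l : ℝ => 4 * p / |t| ^ 2 * l ^ γ) (Ioc 0 L) := by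
      apply Integrable.const_mul
      exact (intervalIntegral.intervalIntegrable_rpow' (by linarith)).1
    rw [← ofReal_integral_eq_lintegral_ofReal hInt]
    · apply ENNReal.ofReal_le_ofReal
      have heq : (∫ l in Ioc (0:ℝ) L, 4 * p / |t| ^ 2 * l ^ γ) =
          ∫ l in (0:ℝ)..L, 4 * p / |t| ^ 2 * l ^ γ := by
        rw [intervalIntegral.integral_of_le hL0.le]
      rw [heq, intervalIntegral.integral_const_mul, integral_rpow (Or.inl (by linarith))]
      rw [Real.zero_rpow (by positivity : γ + 1 ≠ 0), sub_zero]
      have hLsum : L ^ (γ + 1) = L ^ (1 - γ) * (L ^ γ) ^ 2 := by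
        rw [sq, ← Real.rpow_add hL0, ← Real.rpow_add hL0]
        ring_nf
      rw [hTL, hLsum]
      apply le_of_eq
      have hne : (L:ℝ) ^ γ ≠ 0 := hLγ0.ne'
      field_simp
      ring
    · apply (ae_restrict_iff' measurableSet_Ioc).mpr
      apply ae_of_all
      intro l hl
      have : 0 < l ^ γ := Real.rpow_pos_of_pos hl.1 _
      positivity
  -- second piece
  have hb2 : (∫⁻ l in Ioi L,
        ENNReal.ofReal (l ^ γ * p / ((l ^ γ * p) ^ 2 + (t - l ^ γ * q) ^ 2))) ≤
      ENNReal.ofReal (1 / (p * (γ - 1)) * L ^ (1 - γ)) := by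
    have step1 : (∫⁻ l in Ioi L,
        ENNReal.ofReal (l ^ γ * p / ((l ^ γ * p) ^ 2 + (t - l ^ γ * q) ^ 2))) ≤
        ∫⁻ l in Ioi L, ENNReal.ofReal (p⁻¹ * l ^ (-γ)) := by
      apply setLIntegral_mono' measurableSet_Ioi
      intro l hl
      apply ENNReal.ofReal_le_ofReal
      have hl0 : 0 < l := hL0.trans hl
      have hlγ : 0 < l ^ γ := Real.rpow_pos_of_pos hl0 _
      have hN : 0 < l ^ γ * p := by positivity
      calc l ^ γ * p / ((l ^ γ * p) ^ 2 + (t - l ^ γ * q) ^ 2) ≤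
            l ^ γ * p / ((l ^ γ * p) ^ 2) := by
            apply div_le_div_of_nonneg_left hN.le (by positivity)
            nlinarith [sq_nonneg (t - l ^ γ * q)]
        _ = p⁻¹ * l ^ (-γ) := by
            rw [Real.rpow_neg hl0.le]
            field_simp
    refine step1.trans ?_
    have hInt : IntegrableOn (fun l : ℝ => p⁻¹ * l ^ (-γ)) (Ioi L) := by
      apply Integrable.const_mul
      exact integrableOn_Ioi_rpow_of_lt (by linarith) hL0
    rw [← ofReal_integral_eq_lintegral_ofReal hInt]
    · apply ENNReal.ofReal_le_ofReal
      rw [integral_const_mul, integral_Ioi_rpow_of_lt (by linarith) hL0]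
      apply le_of_eq
      have he : -γ + 1 = 1 - γ := by ring
      rw [he]
      have h1 : γ - 1 ≠ 0 := sub_ne_zero.mpr hγ.ne'
      have h2 : (1:ℝ) - γ ≠ 0 := by intro h; apply h1; linarith [sub_eq_zero.mp h]
      field_simp
      ring
    · apply (ae_restrict_iff' measurableSet_Ioi).mpr
      apply ae_of_all
      intro l hl
      have hl0 : 0 < l := hL0.trans hl
      have : 0 < l ^ (-γ) := Real.rpow_pos_of_pos hl0 _
      positivity
  refine (add_le_add hb1 hb2).trans ?_
  rw [← ENNReal.ofReal_add (mul_nonneg (by positivity) hL1γnn) (mul_nonneg (by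
      have h9 : (0:ℝ) < γ - 1 := by linarith
      positivity) hL1γnn)]
  apply ENNReal.ofReal_le_ofReal
  have hL1γ : L ^ (1 - γ) = (2 * M) ^ ((γ - 1) / γ) * |t| ^ (-1 + 1 / γ) := by
    have e1 : γ * ((1 - γ) / γ) = 1 - γ := by field_simp
    have e2 : L ^ (1 - γ) = (|t| / (2 * M)) ^ ((1 - γ) / γ) := by
      rw [← hLγ, ← Real.rpow_mul hL0.le, e1]
    rw [e2, Real.div_rpow hT0.le (by positivity)]
    have e3 : ((1 : ℝ) - γ) / γ = -1 + 1 / γ := by field_simp; ring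
    have e4 : (2 * M) ^ ((1 - γ) / γ) = ((2 * M) ^ ((γ - 1) / γ))⁻¹ := by
      rw [← Real.rpow_neg (by positivity)]
      congr 1
      ring
    rw [e4, e3, div_eq_mul_inv, inv_inv]
    ring
  rw [hL1γ]
  apply le_of_eq
  ring

lemma Ht_nonneg_aux (a b : ℝ) (hb : 0 < b) (H Ht : ℂ → ℝ)
    (hcont : ContinuousOn Ht {z : ℂ | 0 ≤ z.im})
    (h2 : ∀ ζ ∈ sectorS a b, Ht (ζ ^ ((gammaExp a b : ℝ) : ℂ)) = H ζ)
    (hpos : ∀ z ∈ sectorS' a b, 0 < H z)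
    (x s : ℕ → ℝ) (hx : ∀ n, 0 < x n) (hs : ∀ n, 0 < s n ∧ s n < theta0 a b)
    (t : ℝ)
    (hlim : Tendsto (fun n => (((x n ^ gammaExp a b : ℝ) : ℂ) *
      Complex.exp (((gammaExp a b * s n : ℝ) : ℂ) * Complex.I))) atTop (𝓝 (t : ℂ))) :
    0 ≤ Ht (t : ℂ) := by
  have hθ := theta0_bounds a b hb
  have hγ1 := gamma_gt_one a b hb
  have hγθ := gamma_mul_theta0 a b hb
  have hπ := Real.pi_pos
  set γ := gammaExp a b with hγdef
  set u : ℕ → ℂ :=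
    fun n => (((x n ^ γ : ℝ) : ℂ) * Complex.exp (((γ * s n : ℝ) : ℂ) * Complex.I)) with hudef
  have hγs : ∀ n, 0 < γ * s n ∧ γ * s n < Real.pi := by
    intro n
    refine ⟨mul_pos (by linarith) (hs n).1, ?_⟩
    calc γ * s n < γ * theta0 a b := by
          exact mul_lt_mul_of_pos_left (hs n).2 (by linarith)
      _ = Real.pi := hγθ
  have hmemS : ∀ n, ((x n : ℂ) * Complex.exp (((s n : ℝ) : ℂ) * Complex.I)) ∈ sectorS a b :=
    fun n => mem_sector_of a b hb (hx n) (hs n).1 (hs n).2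
  have hueq : ∀ n, u n = ((x n : ℂ) * Complex.exp (((s n : ℝ) : ℂ) * Complex.I)) ^ ((γ : ℝ) : ℂ) := by
    intro n
    exact (cpow_polar (hx n) ⟨by linarith [(hs n).1], by linarith [(hs n).2, hθ.2]⟩ γ).symm
  have hupos : ∀ n, 0 < Ht (u n) := by
    intro n
    rw [hueq n, h2 _ (hmemS n)]
    exact hpos _ (sector_subset a b (hmemS n))
  have humem : ∀ n, u n ∈ {z : ℂ | 0 ≤ z.im} := by
    intro n
    have him : (u n).im = (x n ^ γ) * Real.sin (γ * s n) := by
      show (((x n ^ γ : ℝ) : ℂ) * Complex.exp (((γ * s n : ℝ) : ℂ) * Complex.I)).im = _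
      rw [Complex.mul_im]
      rw [Complex.exp_ofReal_mul_I_im, Complex.exp_ofReal_mul_I_re]
      simp
    simp only [Set.mem_setOf_eq, him]
    have h1 := Real.sin_pos_of_pos_of_lt_pi (hγs n).1 (hγs n).2
    have h2 := Real.rpow_pos_of_pos (hx n) γ
    positivity
  have hct : ContinuousWithinAt Ht {z : ℂ | 0 ≤ z.im} (t : ℂ) := by
    apply hcont
    simp
  have hten : Tendsto (fun n => Ht (u n)) atTop (𝓝 (Ht (t : ℂ))) := by
    apply hct.tendsto.comp
    rw [tendsto_nhdsWithin_iff]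
    exact ⟨hlim, Filter.Eventually.of_forall humem⟩
  exact ge_of_tendsto' hten (fun n => (hupos n).le)

set_option maxHeartbeats 1000000 in
lemma Ht_nonneg (a b : ℝ) (hb : 0 < b) (H Ht : ℂ → ℝ)
    (hcont : ContinuousOn Ht {z : ℂ | 0 ≤ z.im})
    (h2 : ∀ ζ ∈ sectorS a b, Ht (ζ ^ ((gammaExp a b : ℝ) : ℂ)) = H ζ)
    (hpos : ∀ z ∈ sectorS' a b, 0 < H z) (t : ℝ) :
    0 ≤ Ht (t : ℂ) := by
  have hθ := theta0_bounds a b hb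
  have hγ1 := gamma_gt_one a b hb
  have hγθ := gamma_mul_theta0 a b hb
  have hπ := Real.pi_pos
  set γ := gammaExp a b with hγdef
  have hγ0 : 0 < γ := by linarith
  have hd : Tendsto (fun n : ℕ => theta0 a b / ((n : ℝ) + 2)) atTop (𝓝 0) :=
    Tendsto.div_atTop tendsto_const_nhds
      (tendsto_atTop_add_const_right _ 2 tendsto_natCast_atTop_atTop)
  have hdb : ∀ n : ℕ, 0 < theta0 a b / ((n : ℝ) + 2) ∧
      theta0 a b / ((n : ℝ) + 2) < theta0 a b := by
    intro n
    have h1 : (1 : ℝ) < (n : ℝ) + 2 := by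
      have := Nat.cast_nonneg (α := ℝ) n
      linarith
    exact ⟨div_pos hθ.1 (by linarith), div_lt_self hθ.1 h1⟩
  rcases lt_trichotomy t 0 with h | h | h
  · -- t < 0
    set x : ℝ := (-t) ^ γ⁻¹ with hxdef
    have hx0 : 0 < x := Real.rpow_pos_of_pos (by linarith) _
    have hxγ : x ^ γ = -t := Real.rpow_inv_rpow (by linarith) hγ0.ne'
    apply Ht_nonneg_aux a b hb H Ht hcont h2 hpos (fun _ => x)
      (fun n => theta0 a b - theta0 a b / ((n : ℝ) + 2)) (fun _ => hx0)
      (fun n => ⟨by linarith [(hdb n).2], by linarith [(hdb n).1]⟩) t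
    have hcF : Continuous fun r : ℝ => ((x ^ γ : ℝ) : ℂ) * Complex.exp ((r : ℂ) * Complex.I) := by
      apply continuous_const.mul
      exact Complex.continuous_exp.comp (Complex.continuous_ofReal.mul continuous_const)
    have hsten : Tendsto (fun n : ℕ => γ * (theta0 a b - theta0 a b / ((n : ℝ) + 2))) atTop
        (𝓝 Real.pi) := by
      have := (tendsto_const_nhds (x := theta0 a b) (f := atTop (α := ℕ))).sub hd
      rw [sub_zero] at this
      have h2' := this.const_mul γ
      rwa [hγθ] at h2'
    have := (hcF.tendsto Real.pi).comp hsten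
    have hval : ((x ^ γ : ℝ) : ℂ) * Complex.exp ((Real.pi : ℂ) * Complex.I) = (t : ℂ) := by
      rw [hxγ, Complex.exp_pi_mul_I]
      push_cast
      ring
    rw [hval] at this
    exact this
  · -- t = 0
    subst h
    apply Ht_nonneg_aux a b hb H Ht hcont h2 hpos (fun n => ((n : ℝ) + 2)⁻¹)
      (fun _ => theta0 a b / 2)
      (fun n => by
        have := Nat.cast_nonneg (α := ℝ) n
        positivity)
      (fun n => ⟨by linarith [hθ.1], by linarith [hθ.1]⟩) 0
    have hx0 : Tendsto (fun n : ℕ => ((n : ℝ) + 2)⁻¹) atTop (𝓝 0) :=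
      (tendsto_atTop_add_const_right _ 2 tendsto_natCast_atTop_atTop).inv_tendsto_atTop
    have hxten : Tendsto (fun n : ℕ => (((n : ℝ) + 2)⁻¹) ^ γ) atTop (𝓝 0) := by
      have hca : ContinuousAt (fun y : ℝ => y ^ γ) 0 :=
        (Real.continuous_rpow_const hγ0.le).continuousAt
      have := hca.tendsto.comp hx0
      rwa [Real.zero_rpow hγ0.ne'] at this
    have hc : Tendsto (fun n : ℕ => (((((n : ℝ) + 2)⁻¹) ^ γ : ℝ) : ℂ)) atTop (𝓝 0) := by
      have := (Complex.continuous_ofReal.tendsto 0).comp hxten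
      rw [Complex.ofReal_zero] at this
      exact this
    have := hc.mul_const (Complex.exp (((γ * (theta0 a b / 2) : ℝ) : ℂ) * Complex.I))
    rw [zero_mul] at this
    simpa using this
  · -- 0 < t
    set x : ℝ := t ^ γ⁻¹ with hxdef
    have hx0 : 0 < x := Real.rpow_pos_of_pos h _
    have hxγ : x ^ γ = t := Real.rpow_inv_rpow h.le hγ0.ne'
    apply Ht_nonneg_aux a b hb H Ht hcont h2 hpos (fun _ => x)
      (fun n => theta0 a b / ((n : ℝ) + 2)) (fun _ => hx0) (fun n => hdb n) t
    have hcF : Continuous fun r : ℝ => ((x ^ γ : ℝ) : ℂ) * Complex.exp ((r : ℂ) * Complex.I) := by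
      apply continuous_const.mul
      exact Complex.continuous_exp.comp (Complex.continuous_ofReal.mul continuous_const)
    have hsten : Tendsto (fun n : ℕ => γ * (theta0 a b / ((n : ℝ) + 2))) atTop (𝓝 0) := by
      have h2' := hd.const_mul γ
      rwa [mul_zero] at h2'
    have := (hcF.tendsto 0).comp hsten
    have hval : ((x ^ γ : ℝ) : ℂ) * Complex.exp (((0 : ℝ) : ℂ) * Complex.I) = (t : ℂ) := by
      rw [hxγ]
      simp
    rw [hval] at this
    exact this

set_option maxHeartbeats 1000000 in
/-- for a fixed point `ζ₀` in the open sector `S`, the integral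
`∫₀^∞ H(l ζ₀) dl` is bounded by a constant depending only on `η`, `c` and `ζ₀`,
uniformly over all `c`-admissible positive harmonic functions `H` on `S'`. -/
theorem stmt5 (a b : ℝ) (hb : 0 < b) (c : ℝ) (hc : 0 < c)
    (ζ₀ : ℂ) (hζ₀ : ζ₀ ∈ sectorS a b) :
    ∃ C : ℝ, 0 < C ∧
      ∀ H : ℂ → ℝ, PosHarmonic a b H → Admissible a b c H →
        (∫⁻ l in Set.Ici (0 : ℝ), ENNReal.ofReal (H ((l : ℂ) * ζ₀))) ≤ ENNReal.ofReal C := by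
  have hθ := theta0_bounds a b hb
  have hγ1 := gamma_gt_one a b hb
  have hγθ := gamma_mul_theta0 a b hb
  have hπ := Real.pi_pos
  set γ := gammaExp a b with hγdef
  have hγ0 : 0 < γ := by linarith
  obtain ⟨hφ0, hφθ⟩ := arg_lt_of_mem_sector a b hb hζ₀
  have hζne : ζ₀ ≠ 0 := by
    intro h0
    rw [h0] at hζ₀
    simpa using hζ₀.1
  set ρ₀ := ‖ζ₀‖ with hρdef
  have hρ0 : 0 < ρ₀ := (norm_pos_iff.mpr hζne)
  set φ := Complex.arg ζ₀ with hφdef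
  have hγφ0 : 0 < γ * φ := mul_pos hγ0 hφ0
  have hγφπ : γ * φ < Real.pi := by
    rw [← hγθ]
    exact mul_lt_mul_of_pos_left hφθ hγ0
  set M := ρ₀ ^ γ with hMdef
  have hM0 : 0 < M := Real.rpow_pos_of_pos hρ0 _
  set p := M * Real.sin (γ * φ) with hpdef
  set q := M * Real.cos (γ * φ) with hqdef
  have hsin : 0 < Real.sin (γ * φ) := Real.sin_pos_of_pos_of_lt_pi hγφ0 hγφπ
  have hp0 : 0 < p := mul_pos hM0 hsin
  have hpM : p ≤ M := by
    rw [hpdef]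
    nlinarith [Real.sin_le_one (γ * φ)]
  have hqM : |q| ≤ M := by
    rw [hqdef, abs_mul, abs_of_pos hM0]
    nlinarith [Real.abs_cos_le_one (γ * φ)]
  set K := (p / ((γ + 1) * M ^ 2) + 1 / (p * (γ - 1))) * (2 * M) ^ ((γ - 1) / γ) with hKdef
  have hK0 : 0 < K := by
    have h1 : (0:ℝ) < γ - 1 := by linarith
    have h2 : (0:ℝ) < (2 * M) ^ ((γ - 1) / γ) := Real.rpow_pos_of_pos (by positivity) _
    positivity
  refine ⟨Real.pi⁻¹ * (K * c) + 1, by positivity, ?_⟩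
  intro H hPH hAdm
  obtain ⟨Ht, hcont, h2, h3, h4, h5, h6⟩ := hAdm
  have hHtnn : ∀ t : ℝ, 0 ≤ Ht (t : ℂ) := Ht_nonneg a b hb H Ht hcont h2 hPH.1
  set P : ℝ → ℝ → ℝ :=
    fun l t => l ^ γ * p / ((l ^ γ * p) ^ 2 + (t - l ^ γ * q) ^ 2) with hPdef
  have hPnn : ∀ l t : ℝ, 0 < l → 0 ≤ P l t := by
    intro l t hl
    have h7 : (0:ℝ) < l ^ γ := Real.rpow_pos_of_pos hl _
    apply div_nonneg (by positivity) (by positivity)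
  -- Poisson representation
  have hPois : ∀ l : ℝ, 0 < l →
      H ((l : ℂ) * ζ₀) = Real.pi⁻¹ * ∫ t : ℝ, Ht (t : ℂ) * P l t := by
    intro l hl
    have hlγ : (0:ℝ) < l ^ γ := Real.rpow_pos_of_pos hl _
    have hzeq : (l : ℂ) * ζ₀ = ((l * ρ₀ : ℝ) : ℂ) * Complex.exp ((φ : ℂ) * Complex.I) := by
      conv_lhs => rw [← Complex.norm_mul_exp_arg_mul_I ζ₀]
      push_cast
      ring
    have hmem : ((l : ℂ) * ζ₀) ∈ sectorS a b := by
      rw [hzeq]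
      exact mem_sector_of a b hb (by positivity) hφ0 hφθ
    have hcp : ((l : ℂ) * ζ₀) ^ ((γ : ℝ) : ℂ) =
        (((l * ρ₀) ^ γ : ℝ) : ℂ) * Complex.exp (((γ * φ : ℝ) : ℂ) * Complex.I) := by
      rw [hzeq]
      exact cpow_polar (by positivity)
        ⟨by linarith [Complex.neg_pi_lt_arg ζ₀], by linarith [Complex.arg_le_pi ζ₀]⟩ γ
    have hlρ : (l * ρ₀) ^ γ = l ^ γ * M := by
      rw [Real.mul_rpow hl.le hρ0.le]
    have hUV : (((l * ρ₀) ^ γ : ℝ) : ℂ) * Complex.exp (((γ * φ : ℝ) : ℂ) * Complex.I) =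
        ((l ^ γ * q : ℝ) : ℂ) + ((l ^ γ * p : ℝ) : ℂ) * Complex.I := by
      apply Complex.ext
      · simp only [Complex.mul_re, Complex.ofReal_re, Complex.ofReal_im,
          Complex.exp_ofReal_mul_I_re, Complex.exp_ofReal_mul_I_im, Complex.add_re,
          Complex.mul_I_re, Complex.mul_I_im, Complex.I_re, Complex.I_im, hlρ, hpdef, hqdef]
        ring
      · simp only [Complex.mul_im, Complex.ofReal_re, Complex.ofReal_im,
          Complex.exp_ofReal_mul_I_re, Complex.exp_ofReal_mul_I_im, Complex.add_im,
          Complex.mul_I_re, Complex.mul_I_im, Complex.I_re, Complex.I_im, hlρ, hpdef, hqdef]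
        ring
    have hH : H ((l : ℂ) * ζ₀) = Ht (((l ^ γ * q : ℝ) : ℂ) + ((l ^ γ * p : ℝ) : ℂ) * Complex.I) := by
      rw [← h2 _ hmem, hcp, hUV]
    rw [hH, h6 (l ^ γ * q) (l ^ γ * p) (by positivity), one_div]
  -- continuity / measurability
  have hHtm : Continuous fun t : ℝ => Ht (t : ℂ) := by
    apply hcont.comp_continuous Complex.continuous_ofReal
    intro t
    simp
  have hrm : Measurable fun l : ℝ => l ^ γ := (Real.continuous_rpow_const hγ0.le).measurable
  have hPm : Measurable (Function.uncurry fun l t : ℝ => ENNReal.ofReal (Ht (t : ℂ) * P l t)) := by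
    apply Measurable.ennreal_ofReal
    apply Measurable.mul
    · exact hHtm.measurable.comp measurable_snd
    · apply Measurable.div
      · exact (hrm.comp measurable_fst).mul measurable_const
      · exact (((hrm.comp measurable_fst).mul measurable_const).pow measurable_const).add
          ((measurable_snd.sub ((hrm.comp measurable_fst).mul measurable_const)).pow
            measurable_const)
  have hfun : (fun t : ℝ => Ht (t : ℂ) * (K * |t| ^ (-1 + 1 / γ))) =
      fun t : ℝ => K * (Ht (t : ℂ) * |t| ^ (-1 + 1 / γ)) := by
    funext t
    ring
  have hint : Integrable (fun t : ℝ => Ht (t : ℂ) * (K * |t| ^ (-1 + 1 / γ))) := by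
    rw [hfun]
    exact h4.const_mul K
  have hnn : 0 ≤ᵐ[volume] fun t : ℝ => Ht (t : ℂ) * (K * |t| ^ (-1 + 1 / γ)) := by
    apply ae_of_all
    intro t
    exact mul_nonneg (hHtnn t) (mul_nonneg hK0.le (Real.rpow_nonneg (abs_nonneg t) _))
  have hKc : (∫ t : ℝ, Ht (t : ℂ) * (K * |t| ^ (-1 + 1 / γ))) ≤ K * c := by
    rw [hfun, integral_const_mul]
    exact mul_le_mul_of_nonneg_left h5 hK0.le
  have hne0 : ∀ᵐ t : ℝ, t ≠ 0 := by
    refine ae_iff.mpr ?_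
    simp only [not_not]
    have : {t : ℝ | t = 0} = {0} := by ext t; simp
    rw [this]
    exact measure_singleton 0
  calc (∫⁻ l in Set.Ici (0 : ℝ), ENNReal.ofReal (H ((l : ℂ) * ζ₀)))
      = ∫⁻ l in Set.Ioi (0 : ℝ), ENNReal.ofReal (H ((l : ℂ) * ζ₀)) :=
        (setLIntegral_congr Ioi_ae_eq_Ici).symm
    _ ≤ ∫⁻ l in Set.Ioi (0 : ℝ),
          ENNReal.ofReal Real.pi⁻¹ * ∫⁻ t : ℝ, ENNReal.ofReal (Ht (t : ℂ) * P l t) := by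
        apply setLIntegral_mono' measurableSet_Ioi
        intro l hl
        rw [hPois l hl]
        by_cases hfi : Integrable (fun t : ℝ => Ht (t : ℂ) * P l t)
        · rw [ENNReal.ofReal_mul (by positivity), ofReal_integral_eq_lintegral_ofReal hfi
            (ae_of_all _ fun t => mul_nonneg (hHtnn t) (hPnn l t hl))]
        · rw [integral_undef hfi]
          simp
    _ = ENNReal.ofReal Real.pi⁻¹ *
          ∫⁻ l in Set.Ioi (0 : ℝ), ∫⁻ t : ℝ, ENNReal.ofReal (Ht (t : ℂ) * P l t) :=
        lintegral_const_mul' _ _ ENNReal.ofReal_ne_top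
    _ = ENNReal.ofReal Real.pi⁻¹ *
          ∫⁻ t : ℝ, ∫⁻ l in Set.Ioi (0 : ℝ), ENNReal.ofReal (Ht (t : ℂ) * P l t) := by
        rw [lintegral_lintegral_swap hPm.aemeasurable]
    _ ≤ ENNReal.ofReal Real.pi⁻¹ *
          ∫⁻ t : ℝ, ENNReal.ofReal (Ht (t : ℂ) * (K * |t| ^ (-1 + 1 / γ))) := by
        apply mul_le_mul_right
        apply lintegral_mono_ae
        filter_upwards [hne0] with t ht
        calc (∫⁻ l in Set.Ioi (0 : ℝ), ENNReal.ofReal (Ht (t : ℂ) * P l t))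
            = ∫⁻ l in Set.Ioi (0 : ℝ), ENNReal.ofReal (Ht (t : ℂ)) * ENNReal.ofReal (P l t) := by
              apply setLIntegral_congr_fun measurableSet_Ioi
              intro l hl
              exact ENNReal.ofReal_mul (hHtnn t)
          _ = ENNReal.ofReal (Ht (t : ℂ)) * ∫⁻ l in Set.Ioi (0 : ℝ), ENNReal.ofReal (P l t) :=
              lintegral_const_mul' _ _ ENNReal.ofReal_ne_top
          _ ≤ ENNReal.ofReal (Ht (t : ℂ)) * ENNReal.ofReal (K * |t| ^ (-1 + 1 / γ)) := by
              apply mul_le_mul_right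
              exact kernel_bound hγ1 hp0 hpM hqM ht
          _ = ENNReal.ofReal (Ht (t : ℂ) * (K * |t| ^ (-1 + 1 / γ))) :=
              (ENNReal.ofReal_mul (hHtnn t)).symm
    _ = ENNReal.ofReal Real.pi⁻¹ *
          ENNReal.ofReal (∫ t : ℝ, Ht (t : ℂ) * (K * |t| ^ (-1 + 1 / γ))) := by
        rw [ofReal_integral_eq_lintegral_ofReal hint hnn]
    _ ≤ ENNReal.ofReal Real.pi⁻¹ * ENNReal.ofReal (K * c) :=
        mul_le_mul_right (ENNReal.ofReal_le_ofReal hKc) _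
    _ ≤ ENNReal.ofReal (Real.pi⁻¹ * (K * c) + 1) := by
        rw [← ENNReal.ofReal_mul (by positivity)]
        apply ENNReal.ofReal_le_ofReal
        nlinarith [hK0, hc]
end
end

section
/- For all N, κ > 0 there is a constant c_{N,κ} > 0, depending only on η, N and κ, such that for all positive harmonic functions H₁, H₂ on S', every N-sparse subset Z of S × S (points counted with multiplicity) and every subset Z' of S × S such that Z is κ-dominated by Z', one has Σ_{(ζ,ξ) ∈ Z} H₁(ζ) H₂(ξ) ≤ c_{N,κ} Σ_{(ζ',ξ') ∈ Z'} H₁(ζ') H₂(ξ'). -/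
open MeasureTheory Filter Set
open scoped ENNReal Topology

noncomputable section

/-- A collection of points with multiplicities (encoded as a multiplicity function
`Z : α → ℕ`) is `N`-sparse if every open ball of radius `1` contains at most `N` of its
points counted with multiplicity. -/
def NSparse {α : Type*} [PseudoMetricSpace α] (N : ℝ) (Z : α → ℕ) : Prop :=
  ∀ x : α,
    (∑' y : α, Set.indicator (Metric.ball x 1) (fun y => ((Z y : ℝ≥0∞))) y) ≤ ENNReal.ofReal N

/-- `Z` is `κ`-dominated by `Z'` (both with multiplicities): every point of `Z` lies at
distance at most `κ` from some point of `Z'`. -/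
def DomBy {α : Type*} [PseudoMetricSpace α] (κ : ℝ) (Z Z' : α → ℕ) : Prop :=
  ∀ x, Z x ≠ 0 → ∃ y, Z' y ≠ 0 ∧ dist x y ≤ κ


section Aux
open Metric

/-- the conjugate-gradient function -/
def hgrad (f : ℂ → ℝ) (z : ℂ) : ℂ :=
  ((fderiv ℝ f z 1 : ℝ) : ℂ) - Complex.I * ((fderiv ℝ f z Complex.I : ℝ) : ℂ)

lemma clm_ext_complexR {F : Type*} [NormedAddCommGroup F] [NormedSpace ℝ F]
    (L M : ℂ →L[ℝ] F) (h1 : L 1 = M 1) (hI : L Complex.I = M Complex.I) : L = M := by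
  ext w
  have hw : w = w.re • (1 : ℂ) + w.im • Complex.I := by
    simp [Complex.real_smul, Complex.re_add_im]
  rw [hw, map_add, map_add, L.map_smul, L.map_smul, M.map_smul, M.map_smul, h1, hI]

lemma complex_decomp (w : ℂ) : w = w.re • (1 : ℂ) + w.im • Complex.I := by
  simp [Complex.real_smul, Complex.re_add_im]

theorem hgrad_differentiable {f : ℂ → ℝ} {U : Set ℂ} (hU : IsOpen U)
    (hf : HarmonicOnSet f U) : ∀ z ∈ U, DifferentiableAt ℂ (hgrad f) z := by
  intro z hz
  obtain ⟨hf2, hlap⟩ := hf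
  -- f is C² at z
  have hCA : ContDiffAt ℝ 2 f z := hf2.contDiffAt (hU.mem_nhds hz)
  -- fderiv is C¹ at z
  have hfd : ContDiffAt ℝ 1 (fderiv ℝ f) z := hCA.fderiv_right (by norm_num)
  have hfd' : DifferentiableAt ℝ (fderiv ℝ f) z := hfd.differentiableAt one_ne_zero
  set f'' := fderiv ℝ (fderiv ℝ f) z with hf''def
  have hf'' : HasFDerivAt (fderiv ℝ f) f'' z := hfd'.hasFDerivAt
  -- symmetry of second derivative
  have hsym : ∀ v w : ℂ, f'' v w = f'' w v := by
    intro v w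
    apply second_derivative_symmetric_of_eventually (f := f) (f' := fderiv ℝ f) (x := z)
    · filter_upwards [hU.eventually_mem hz] with y hy
      exact ((hf2.contDiffAt (hU.mem_nhds hy)).differentiableAt two_ne_zero).hasFDerivAt
    · exact hf''
  -- Laplace equation
  have hlap' : f'' 1 1 + f'' Complex.I Complex.I = 0 := by
    have := hlap z hz
    rwa [iteratedFDeriv_two_apply, iteratedFDeriv_two_apply] at this
  -- derivative of y ↦ fderiv f y w
  have hA : ∀ w : ℂ, HasFDerivAt (fun y => fderiv ℝ f y w)
      (ContinuousLinearMap.flip f'' w) z := by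
    intro w
    have := hf''.clm_apply (hasFDerivAt_const w z)
    simpa using this
  have hA1 : HasFDerivAt (fun y => ((fderiv ℝ f y (1:ℂ) : ℝ) : ℂ))
      (Complex.ofRealCLM.comp (ContinuousLinearMap.flip f'' 1)) z :=
    Complex.ofRealCLM.hasFDerivAt.comp z (hA 1)
  have hAI : HasFDerivAt (fun y => Complex.I * ((fderiv ℝ f y Complex.I : ℝ) : ℂ))
      (Complex.I • (Complex.ofRealCLM.comp (ContinuousLinearMap.flip f'' Complex.I))) z :=
    (Complex.ofRealCLM.hasFDerivAt.comp z (hA Complex.I)).const_mul Complex.I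
  set L : ℂ →L[ℝ] ℂ := Complex.ofRealCLM.comp (ContinuousLinearMap.flip f'' 1) -
      Complex.I • (Complex.ofRealCLM.comp (ContinuousLinearMap.flip f'' Complex.I)) with hLdef
  have hL : HasFDerivAt (hgrad f) L z := hA1.sub hAI
  have hL1 : L 1 = ((f'' 1 1 : ℝ) : ℂ) - Complex.I * ((f'' 1 Complex.I : ℝ) : ℂ) := by
    simp [hLdef]
  have hLI : L Complex.I = ((f'' Complex.I 1 : ℝ) : ℂ)
      - Complex.I * ((f'' Complex.I Complex.I : ℝ) : ℂ) := by
    simp [hLdef]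
  -- Cauchy-Riemann
  have hCR : L Complex.I = Complex.I * L 1 := by
    rw [hL1, hLI, hsym Complex.I 1]
    have h2 : (f'' Complex.I Complex.I : ℝ) = -(f'' 1 1) := by linarith
    rw [h2]
    push_cast
    ring_nf
    rw [Complex.I_sq]
    ring
  -- complex linearity
  set L' : ℂ →L[ℂ] ℂ := L 1 • ContinuousLinearMap.id ℂ ℂ with hL'def
  have hEq : L'.restrictScalars ℝ = L := by
    apply clm_ext_complexR
    · simp [hL'def]
    · simp [hL'def, hCR, mul_comm]
  have hL2 : HasFDerivAt (hgrad f) (L'.restrictScalars ℝ) z := hEq ▸ hL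
  exact ⟨L', hasFDerivAt_of_restrictScalars ℝ hL hEq⟩


theorem exists_primitive {h : ℂ → ℂ} {c : ℂ} {R : ℝ} (hR : 0 < R)
    (hh : DifferentiableOn ℂ h (ball c R)) :
    ∃ g : ℂ → ℂ, ∀ z ∈ ball c R, HasDerivAt g (h z) z := by
  have hopen : IsOpen (ball c R) := isOpen_ball
  have han : AnalyticOnNhd ℂ h (ball c R) := hh.analyticOnNhd hopen
  have hderivcont : ContinuousOn (deriv h) (ball c R) := han.deriv.continuousOn
  have hcont : ContinuousOn h (ball c R) := hh.continuousOn
  have hd : ∀ z ∈ ball c R, HasDerivAt h (deriv h z) z := fun z hz =>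
    (han z hz).differentiableAt.hasDerivAt
  set p : ℂ → ℝ → ℂ := fun x t => c + (t : ℂ) * (x - c) with hpdef
  set F : ℂ → ℝ → ℂ := fun x t => (x - c) * h (p x t) with hFdef
  set F' : ℂ → ℝ → ℂ := fun x t =>
    1 * h (p x t) + (x - c) * (deriv h (p x t) * (t : ℂ)) with hF'def
  refine ⟨fun z => ∫ t in (0:ℝ)..1, F z t, ?_⟩
  intro z₀ hz₀
  set r₀ : ℝ := dist z₀ c with hr₀def
  have hr₀R : r₀ < R := mem_ball.mp hz₀
  set ε : ℝ := (R - r₀) / 2 with hεdef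
  have hε : 0 < ε := by simp only [hεdef]; linarith
  set r₁ : ℝ := r₀ + ε with hr₁def
  have hr₁R : r₁ < R := by
    simp only [hr₁def, hεdef]
    have : 0 ≤ r₀ := dist_nonneg
    linarith
  -- the path stays in the closed ball of radius r₁
  have key : ∀ x ∈ ball z₀ ε, ∀ t : ℝ, |t| ≤ 1 → p x t ∈ closedBall c r₁ := by
    intro x hx t ht
    have hxc : dist x c ≤ r₁ := by
      have := dist_triangle x z₀ c
      have hx' := mem_ball.mp hx
      simp only [hr₁def]
      linarith [hx', this]
    have : dist (p x t) c = |t| * dist x c := by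
      simp only [hpdef]
      rw [dist_eq_norm]
      have : c + (t:ℂ) * (x - c) - c = (t:ℂ) * (x - c) := by ring
      rw [this, norm_mul, Complex.norm_real, Real.norm_eq_abs, dist_eq_norm]
    rw [mem_closedBall, this]
    calc |t| * dist x c ≤ 1 * r₁ := by
          apply mul_le_mul ht hxc dist_nonneg zero_le_one
      _ = r₁ := one_mul r₁
  have hsub : closedBall c r₁ ⊆ ball c R := closedBall_subset_ball hr₁R
  -- bounds on h and deriv h
  obtain ⟨M₁, hM₁⟩ := (isCompact_closedBall c r₁).exists_bound_of_continuousOn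
    (hcont.mono hsub)
  obtain ⟨M₂, hM₂⟩ := (isCompact_closedBall c r₁).exists_bound_of_continuousOn
    (hderivcont.mono hsub)
  have hM₁0 : 0 ≤ M₁ := le_trans (norm_nonneg _) (hM₁ c (mem_closedBall_self (by positivity)))
  have hM₂0 : 0 ≤ M₂ := le_trans (norm_nonneg _) (hM₂ c (mem_closedBall_self (by positivity)))
  have habs : ∀ t ∈ Set.uIoc (0:ℝ) 1, |t| ≤ 1 := by
    intro t ht
    rw [Set.uIoc_of_le zero_le_one] at ht
    rw [abs_le]; constructor <;> [linarith [ht.1]; exact ht.2]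
  have habs' : ∀ t ∈ Set.uIcc (0:ℝ) 1, |t| ≤ 1 := by
    intro t ht
    rw [Set.uIcc_of_le zero_le_one] at ht
    rw [abs_le]; constructor <;> [linarith [ht.1]; exact ht.2]
  -- continuity of F x in t
  have hFcont : ∀ x ∈ ball z₀ ε, ContinuousOn (F x) (Set.uIcc (0:ℝ) 1) := by
    intro x hx
    apply ContinuousOn.mul continuousOn_const
    apply hcont.comp
    · exact (Continuous.continuousOn (by fun_prop))
    · intro t ht
      exact hsub (key x hx t (habs' t ht))
  have hF'cont : ContinuousOn (F' z₀) (Set.uIcc (0:ℝ) 1) := by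
    have hz₀ε : z₀ ∈ ball z₀ ε := mem_ball_self hε
    have hmap : ∀ t ∈ Set.uIcc (0:ℝ) 1, p z₀ t ∈ ball c R := fun t ht =>
      hsub (key z₀ hz₀ε t (habs' t ht))
    apply ContinuousOn.add
    · apply ContinuousOn.mul continuousOn_const
      exact hcont.comp (Continuous.continuousOn (by fun_prop)) hmap
    · apply ContinuousOn.mul continuousOn_const
      apply ContinuousOn.mul
      · exact hderivcont.comp (Continuous.continuousOn (by fun_prop)) hmap
      · fun_prop
  -- differentiation under the integral sign
  have main := intervalIntegral.hasDerivAt_integral_of_dominated_loc_of_deriv_le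
    (μ := volume) (F := F) (F' := F') (x₀ := z₀) (a := 0) (b := 1)
    (bound := fun _ => 1 * M₁ + r₁ * (M₂ * 1)) (ball_mem_nhds z₀ hε)
    ?_ ?_ ?_ ?_ ?_ ?_
  · obtain ⟨hint, hder⟩ := main
    -- compute the integral of F' z₀
    have hψ : ∀ t ∈ Set.uIcc (0:ℝ) 1,
        HasDerivAt (fun s : ℝ => (s:ℂ) * h (p z₀ s)) (F' z₀ t) t := by
      intro t ht
      have hz₀ε : z₀ ∈ ball z₀ ε := mem_ball_self hε
      have hmem : p z₀ t ∈ ball c R := hsub (key z₀ hz₀ε t (habs' t ht))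
      have h1 : HasDerivAt (fun s : ℝ => (s:ℂ)) 1 t := by
        exact Complex.ofRealCLM.hasDerivAt (x := t)
      have h2 : HasDerivAt (fun s : ℝ => p z₀ s) (z₀ - c) t := by
        have := (h1.mul_const (z₀ - c)).const_add c
        simpa [hpdef] using this
      have h3 : HasDerivAt (fun s : ℝ => h (p z₀ s)) ((z₀ - c) • deriv h (p z₀ t)) t :=
        (hd _ hmem).scomp t h2
      have h4 := h1.mul h3
      refine h4.congr_deriv ?_
      simp only [hF'def, smul_eq_mul]
      ring
    have hF'int : IntervalIntegrable (F' z₀) volume 0 1 :=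
      hF'cont.intervalIntegrable
    have hFTC := intervalIntegral.integral_eq_sub_of_hasDerivAt hψ hF'int
    rw [hFTC] at hder
    refine hder.congr_deriv ?_
    simp only [hpdef]
    norm_num
  · filter_upwards [ball_mem_nhds z₀ hε] with x hx
    exact ((hFcont x hx).mono (Set.uIoc_subset_uIcc)).aestronglyMeasurable measurableSet_uIoc
  · exact (hFcont z₀ (mem_ball_self hε)).intervalIntegrable
  · exact (hF'cont.mono (Set.uIoc_subset_uIcc)).aestronglyMeasurable measurableSet_uIoc
  · apply ae_of_all
    intro t ht x hx
    have hmem : p x t ∈ closedBall c r₁ := key x hx t (habs t ht)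
    simp only [hF'def]
    apply le_trans (norm_add_le _ _)
    apply add_le_add
    · simpa using hM₁ _ hmem
    · rw [norm_mul, norm_mul, Complex.norm_real, Real.norm_eq_abs]
      have hxc : ‖x - c‖ ≤ r₁ := by
        rw [← dist_eq_norm]
        have := dist_triangle x z₀ c
        have hx' := mem_ball.mp hx
        simp only [hr₁def]; linarith
      apply mul_le_mul hxc _ (by positivity) (by linarith [dist_nonneg (x := z₀) (y := c)])
      apply mul_le_mul (hM₂ _ hmem) (habs t ht) (abs_nonneg t) hM₂0
  · exact intervalIntegrable_const
  · apply ae_of_all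
    intro t ht x hx
    have hmem : p x t ∈ ball c R := hsub (key x hx t (habs t ht))
    have h2 : HasDerivAt (fun y => p y t) ((t:ℂ)) x := by
      have := ((hasDerivAt_id x).sub_const c).const_mul (t:ℂ)
      have h' := this.const_add c
      simpa [hpdef] using h'
    have h3 : HasDerivAt (fun y => h (p y t)) (deriv h (p x t) * (t:ℂ)) x :=
      (hd _ hmem).comp x h2
    exact ((hasDerivAt_id x).sub_const c).mul h3

theorem harmonic_rep {f : ℂ → ℝ} {U : Set ℂ} (hU : IsOpen U) (hf : HarmonicOnSet f U)
    {c : ℂ} {R : ℝ} (hR : 0 < R) (hball : ball c R ⊆ U) :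
    ∃ G : ℂ → ℂ, (∀ z ∈ ball c R, HasDerivAt G (hgrad f z) z) ∧
      ∀ z ∈ ball c R, (G z).re = f z := by
  have hdiff : DifferentiableOn ℂ (hgrad f) (ball c R) := fun z hz =>
    (hgrad_differentiable hU hf z (hball hz)).differentiableWithinAt
  obtain ⟨g, hg⟩ := exists_primitive hR hdiff
  have hfd : ∀ z ∈ ball c R, HasFDerivAt f (fderiv ℝ f z) z := fun z hz =>
    ((hf.1.contDiffAt (hU.mem_nhds (hball hz))).differentiableAt two_ne_zero).hasFDerivAt
  -- f - Re g has zero derivative on the ball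
  have hzero : ∀ z ∈ ball c R, HasFDerivAt (fun w => f w - (g w).re)
      (0 : ℂ →L[ℝ] ℝ) z := by
    intro z hz
    have hre : HasFDerivAt (fun w => (g w).re)
        (Complex.reCLM.comp ((((1 : ℂ →L[ℂ] ℂ).smulRight (hgrad f z))).restrictScalars ℝ)) z :=
      Complex.reCLM.hasFDerivAt.comp z (((hg z hz).hasFDerivAt).restrictScalars ℝ)
    have hEq : fderiv ℝ f z =
        Complex.reCLM.comp ((((1 : ℂ →L[ℂ] ℂ).smulRight (hgrad f z))).restrictScalars ℝ) := by
      apply clm_ext_complexR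
      · simp [hgrad]
      · simp [hgrad]
    have := (hfd z hz).sub hre
    rw [hEq] at this
    simp at this
    exact this
  -- hence f - Re g is constant on the ball
  have hconst : ∀ z ∈ ball c R, f z - (g z).re = f c - (g c).re := by
    intro z hz
    have hc : c ∈ ball c R := mem_ball_self hR
    have := (convex_ball c R).norm_image_sub_le_of_norm_hasFDerivWithin_le (C := 0)
      (fun w hw => (hzero w hw).hasFDerivWithinAt)
      (fun w _ => by simp) hc hz
    simp only [norm_zero, zero_mul] at this
    have h0 : ‖(f z - (g z).re) - (f c - (g c).re)‖ ≤ 0 := this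
    have := norm_eq_zero.mp (le_antisymm h0 (norm_nonneg _))
    linarith [sub_eq_zero.mp this]
  refine ⟨fun z => g z + ((f c - (g c).re : ℝ) : ℂ), fun z hz => ?_, fun z hz => ?_⟩
  · simpa using (hg z hz).add_const ((f c - (g c).re : ℝ) : ℂ)
  · have := hconst z hz
    simp only [Complex.add_re, Complex.ofReal_re]
    linarith

theorem harnack_ball {f : ℂ → ℝ} {U : Set ℂ} (hU : IsOpen U) (hf : HarmonicOnSet f U)
    (hpos : ∀ z ∈ U, 0 < f z) {c : ℂ} {R : ℝ} (hR : 0 < R) (hball : ball c R ⊆ U) :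
    ∀ z, dist z c ≤ R / 6 → f z ≤ 2 * f c ∧ f c ≤ 2 * f z := by
  obtain ⟨G, hGd, hGre⟩ := harmonic_rep hU hf hR hball
  intro z hdz
  have hzball : z ∈ ball c R := by
    rw [mem_ball]
    linarith [hdz, hR]
  have hcball : c ∈ ball c R := mem_ball_self hR
  have hfz : 0 < f z := hpos z (hball hzball)
  have hfc : 0 < f c := hpos c (hball hcball)
  set w₀ : ℂ := G c with hw₀def
  have hrew₀ : w₀.re = f c := hGre c hcball
  -- denominators don't vanish
  have hden : ∀ y ∈ ball c R, G y + (starRingEnd ℂ) w₀ ≠ 0 := by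
    intro y hy hContra
    have : (G y + (starRingEnd ℂ) w₀).re = f y + f c := by
      simp [Complex.add_re, Complex.conj_re, hrew₀, hGre y hy]
    rw [hContra] at this
    simp only [Complex.zero_re] at this
    have := hpos y (hball hy)
    linarith
  set Φ : ℂ → ℂ := fun y => (G y - w₀) / (G y + (starRingEnd ℂ) w₀) with hΦdef
  have hGdiff : DifferentiableOn ℂ G (ball c R) := fun y hy =>
    ((hGd y hy).differentiableAt).differentiableWithinAt
  have hΦdiff : DifferentiableOn ℂ Φ (ball c R) :=
    (hGdiff.sub (differentiableOn_const _)).div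
      (hGdiff.add (differentiableOn_const _)) hden
  have hΦc : Φ c = 0 := by simp [hΦdef, hw₀def]
  -- Φ maps the ball into the unit ball
  have hmaps : Set.MapsTo Φ (ball c R) (ball (Φ c) 1) := by
    intro y hy
    rw [hΦc, mem_ball, dist_zero_right, hΦdef]
    rw [norm_div, div_lt_one (norm_pos_iff.mpr (hden y hy))]
    have h1 : Complex.normSq (G y - w₀) < Complex.normSq (G y + (starRingEnd ℂ) w₀) := by
      simp only [Complex.normSq_apply, Complex.sub_re, Complex.sub_im, Complex.add_re,
        Complex.add_im, Complex.conj_re, Complex.conj_im]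
      have hrey : (G y).re = f y := hGre y hy
      have : 0 < f y := hpos y (hball hy)
      nlinarith [sq_nonneg ((G y).im - w₀.im)]
    have e1 : ‖G y - w₀‖ ^ 2 = Complex.normSq (G y - w₀) := by
      rw [Complex.sq_norm]
    have e2 : ‖G y + (starRingEnd ℂ) w₀‖ ^ 2 = Complex.normSq (G y + (starRingEnd ℂ) w₀) := by
      rw [Complex.sq_norm]
    nlinarith [norm_nonneg (G y - w₀), norm_nonneg (G y + (starRingEnd ℂ) w₀)]
  -- Schwarz lemma
  have hSch := Complex.dist_le_div_mul_dist_of_mapsTo_ball hΦdiff (hmaps.mono_right ball_subset_closedBall) hzball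
  rw [hΦc, dist_zero_right] at hSch
  have hΦbound : ‖Φ z‖ ≤ 1 / 6 := by
    calc ‖Φ z‖ ≤ 1 / R * dist z c := hSch
      _ ≤ 1 / R * (R / 6) := by
          apply mul_le_mul_of_nonneg_left hdz (by positivity)
      _ = 1 / 6 := by field_simp
  -- algebra
  set w : ℂ := G z with hwdef
  have hfzre : w.re = f z := hGre z hzball
  have hkey : w - w₀ = Φ z * (w + (starRingEnd ℂ) w₀) := by
    rw [hΦdef]
    field_simp [hden z hzball]
    rfl
  have hnorm2 : ‖w₀ + (starRingEnd ℂ) w₀‖ = 2 * f c := by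
    rw [Complex.add_conj]
    rw [Complex.norm_real, Real.norm_eq_abs, abs_of_pos (by linarith)]
    rw [hrew₀]
  have hX : ‖w - w₀‖ ≤ (1/6) * (‖w - w₀‖ + 2 * f c) := by
    calc ‖w - w₀‖ = ‖Φ z * (w + (starRingEnd ℂ) w₀)‖ := by rw [hkey]
      _ = ‖Φ z‖ * ‖w + (starRingEnd ℂ) w₀‖ := norm_mul _ _
      _ ≤ (1/6) * ‖w + (starRingEnd ℂ) w₀‖ :=
          mul_le_mul_of_nonneg_right hΦbound (norm_nonneg _)
      _ ≤ (1/6) * (‖w - w₀‖ + ‖w₀ + (starRingEnd ℂ) w₀‖) := by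
          apply mul_le_mul_of_nonneg_left _ (by norm_num)
          have : w + (starRingEnd ℂ) w₀ = (w - w₀) + (w₀ + (starRingEnd ℂ) w₀) := by ring
          rw [this]
          exact norm_add_le _ _
      _ = (1/6) * (‖w - w₀‖ + 2 * f c) := by rw [hnorm2]
  have hX2 : ‖w - w₀‖ ≤ (2/5) * f c := by linarith
  have hre : |f z - f c| ≤ (2/5) * f c := by
    calc |f z - f c| = |(w - w₀).re| := by rw [Complex.sub_re, hfzre, hrew₀]
      _ ≤ ‖w - w₀‖ := Complex.abs_re_le_norm _
      _ ≤ (2/5) * f c := hX2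
  rw [abs_le] at hre
  constructor <;> linarith [hre.1, hre.2]

lemma isOpen_sectorS' (a b : ℝ) : IsOpen (sectorS' a b) := by
  apply IsOpen.inter
  · exact isOpen_lt continuous_const Complex.continuous_im
  · exact isOpen_lt continuous_const ((continuous_const.mul Complex.continuous_re).add (continuous_const.mul Complex.continuous_im))

lemma convex_sectorS (a b : ℝ) : Convex ℝ (sectorS a b) := by
  apply Convex.inter
  · exact convex_halfSpace_gt ⟨fun x y => Complex.add_im x y, fun c x => by
      simp [Complex.smul_im]⟩ (0:ℝ)
  · refine convex_halfSpace_gt ⟨fun x y => ?_, fun c x => ?_⟩ (0:ℝ)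
    · simp [Complex.add_re, Complex.add_im]; ring
    · simp [Complex.smul_re, Complex.smul_im]; ring

lemma one_lt_log_three : 1 < Real.log 3 := by
  rw [Real.lt_log_iff_exp_lt (by norm_num)]
  calc Real.exp 1 < 2.7182818286 := Real.exp_one_lt_d9
    _ < 3 := by norm_num

lemma sector_ball_subset (a b : ℝ) (hb : 0 < b) :
    ∃ d : ℝ, 0 < d ∧ d ≤ 1 ∧ ∀ z ∈ sectorS a b, ball z d ⊆ sectorS' a b := by
  set S : ℝ := Real.sqrt (a ^ 2 + b ^ 2) with hSdef
  have hS : 0 < S := Real.sqrt_pos.mpr (by positivity)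
  have hS2 : S ^ 2 = a ^ 2 + b ^ 2 := Real.sq_sqrt (by positivity)
  refine ⟨min 1 (Real.log 3 / S), lt_min one_pos (by positivity), min_le_left _ _, ?_⟩
  intro z hz w hw
  obtain ⟨hz1, hz2⟩ := hz
  have hdist : dist w z < min 1 (Real.log 3 / S) := mem_ball.mp hw
  have hn : ‖w - z‖ < min 1 (Real.log 3 / S) := by rwa [← dist_eq_norm]
  have hlog : 1 < Real.log 3 := one_lt_log_three
  simp only [sectorS', Set.mem_setOf_eq]
  constructor
  · -- imaginary part
    have him : |w.im - z.im| ≤ ‖w - z‖ := by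
      have := Complex.abs_im_le_norm (w - z)
      rwa [Complex.sub_im] at this
    have h1 : ‖w - z‖ < 1 := lt_of_lt_of_le hn (min_le_left _ _)
    have := abs_le.mp him
    linarith [this.1]
  · -- linear form
    set x : ℝ := w.re - z.re
    set y : ℝ := w.im - z.im
    have hxy : x ^ 2 + y ^ 2 = ‖w - z‖ ^ 2 := by
      rw [Complex.sq_norm, Complex.normSq_apply, Complex.sub_re,
        Complex.sub_im]
      ring
    have hcs : (b * x + a * y) ^ 2 ≤ S ^ 2 * ‖w - z‖ ^ 2 := by
      rw [hS2, ← hxy]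
      nlinarith [sq_nonneg (a * x - b * y)]
    have hlb : -(S * ‖w - z‖) ≤ b * x + a * y := by
      nlinarith [sq_nonneg (b * x + a * y + S * ‖w - z‖),
        mul_nonneg hS.le (norm_nonneg (w - z))]
    have hSd : S * ‖w - z‖ < Real.log 3 := by
      have h2 : ‖w - z‖ < Real.log 3 / S := lt_of_lt_of_le hn (min_le_right _ _)
      calc S * ‖w - z‖ < S * (Real.log 3 / S) := by
            exact mul_lt_mul_of_pos_left h2 hS
        _ = Real.log 3 := by field_simp
    have hexp : b * w.re + a * w.im = (b * z.re + a * z.im) + (b * x + a * y) := by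
      simp only [x, y]; ring
    rw [hexp]
    linarith

lemma covering_finset (κ : ℝ) (hκ : 0 < κ) :
    ∃ t : Finset (ℂ × ℂ), ∀ q : ℂ × ℂ, ∀ p ∈ closedBall q κ, ∃ x ∈ t, p ∈ ball (q + x) 1 := by
  have hc : IsCompact (closedBall (0 : ℂ × ℂ) κ) := isCompact_closedBall _ _
  obtain ⟨t, ht⟩ := hc.elim_finite_subcover (fun x : ℂ × ℂ => ball x 1)
    (fun _ => isOpen_ball) (fun x hx => mem_iUnion.mpr ⟨x, mem_ball_self one_pos⟩)
  refine ⟨t, fun q p hp => ?_⟩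
  have h0 : p - q ∈ closedBall (0 : ℂ × ℂ) κ := by
    rw [mem_closedBall, dist_zero_right, ← dist_eq_norm]
    exact mem_closedBall.mp hp
  obtain ⟨x, hxt, hx⟩ := mem_iUnion₂.mp (ht h0)
  refine ⟨x, hxt, ?_⟩
  rw [mem_ball] at hx ⊢
  rw [dist_eq_norm] at hx ⊢
  have : p - (q + x) = p - q - x := by ring
  rwa [this]

theorem harnack_sector (a b : ℝ) (hb : 0 < b) (κ : ℝ) (hκ : 0 < κ) :
    ∃ CH : ℝ, 1 ≤ CH ∧ ∀ H : ℂ → ℝ, PosHarmonic a b H →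
      ∀ z ∈ sectorS a b, ∀ z' ∈ sectorS a b, dist z z' ≤ κ → H z ≤ CH * H z' := by
  obtain ⟨d, hd, hd1, hdball⟩ := sector_ball_subset a b hb
  set n : ℕ := ⌈6 * κ / d⌉₊ + 1 with hndef
  have hn0 : 0 < n := Nat.succ_pos _
  have hnd : 6 * κ / d ≤ (n : ℝ) := by
    calc 6 * κ / d ≤ (⌈6 * κ / d⌉₊ : ℝ) := Nat.le_ceil _
      _ ≤ (n : ℝ) := by simp [hndef]
  refine ⟨2 ^ n, one_le_pow₀ (by norm_num), ?_⟩
  intro H hH z hz z' hz' hdist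
  set pt : ℕ → ℂ := fun k => z + ((k : ℝ) / (n : ℝ)) • (z' - z) with hptdef
  have hptmem : ∀ k ≤ n, pt k ∈ sectorS a b := by
    intro k hk
    have ht0 : (0:ℝ) ≤ (k : ℝ) / (n : ℝ) := by positivity
    have ht1 : (k : ℝ) / (n : ℝ) ≤ 1 := by
      rw [div_le_one (by exact_mod_cast hn0)]
      exact_mod_cast hk
    have := convex_sectorS a b hz hz' (by linarith : (0:ℝ) ≤ 1 - (k:ℝ)/(n:ℝ)) ht0 (by ring)
    convert this using 1
    simp only [hptdef]
    module
  have hstep : ∀ k, k < n → H (pt k) ≤ 2 * H (pt (k + 1)) := by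
    intro k hk
    have hmem : pt (k + 1) ∈ sectorS a b := hptmem (k + 1) hk
    have hball : ball (pt (k + 1)) d ⊆ sectorS' a b := hdball _ hmem
    have hdistk : dist (pt k) (pt (k + 1)) ≤ d / 6 := by
      have : pt k - pt (k + 1) = -(((1 : ℝ) / (n : ℝ)) • (z' - z)) := by
        simp only [hptdef]
        push_cast
        module
      rw [dist_eq_norm, this, norm_neg, norm_smul]
      simp only [Real.norm_eq_abs]
      rw [abs_of_pos (by positivity : (0:ℝ) < 1 / (n:ℝ))]
      have h1 : ‖z' - z‖ ≤ κ := by rw [← dist_eq_norm, dist_comm]; exact hdist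
      calc 1 / (n : ℝ) * ‖z' - z‖ ≤ 1 / (n : ℝ) * κ := by
            apply mul_le_mul_of_nonneg_left h1 (by positivity)
        _ ≤ d / 6 := by
            rw [div_mul_eq_mul_div, div_le_div_iff₀ (by exact_mod_cast hn0) (by norm_num)]
            have h6 : 6 * κ ≤ (n:ℝ) * d := by
              have := mul_le_mul_of_nonneg_right hnd hd.le
              rwa [div_mul_cancel₀ _ hd.ne'] at this
            nlinarith
    exact (harnack_ball (isOpen_sectorS' a b) hH.2 hH.1 hd hball (pt k) hdistk).1
  have hchain : ∀ k, k ≤ n → H z ≤ 2 ^ k * H (pt k) := by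
    intro k
    induction k with
    | zero => intro _; simp [hptdef]
    | succ m ih =>
        intro hm
        have h1 := ih (by omega)
        have h2 := hstep m (by omega)
        calc H z ≤ 2 ^ m * H (pt m) := h1
          _ ≤ 2 ^ m * (2 * H (pt (m + 1))) := by
              apply mul_le_mul_of_nonneg_left h2 (by positivity)
          _ = 2 ^ (m + 1) * H (pt (m + 1)) := by ring
  have hfin := hchain n le_rfl
  have hptn : pt n = z' := by
    simp only [hptdef]
    rw [div_self (by positivity : (n:ℝ) ≠ 0)]
    module
  calc H z ≤ 2 ^ n * H (pt n) := hfin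
    _ = 2 ^ n * H z' := by rw [hptn]

end Aux

open Metric in
set_option maxHeartbeats 1000000 in
/-- comparison of double sums `Σ H₁(ζ)H₂(ξ)` over an `N`-sparse family `Z` in
`S × S` dominated by another family `Z'` in `S × S`, for positive harmonic `H₁, H₂` on `S'`. -/
theorem stmt7 (a b : ℝ) (hb : 0 < b) (N κ : ℝ) (hN : 0 < N) (hκ : 0 < κ) :
    ∃ C : ℝ, 0 < C ∧
      ∀ H₁ H₂ : ℂ → ℝ, PosHarmonic a b H₁ → PosHarmonic a b H₂ →
        ∀ Z Z' : ℂ × ℂ → ℕ,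
          (∀ p : ℂ × ℂ, Z p ≠ 0 → p.1 ∈ sectorS a b ∧ p.2 ∈ sectorS a b) →
          (∀ p : ℂ × ℂ, Z' p ≠ 0 → p.1 ∈ sectorS a b ∧ p.2 ∈ sectorS a b) →
          NSparse N Z → DomBy κ Z Z' →
          (∑' p : ℂ × ℂ, (Z p : ℝ≥0∞) * (ENNReal.ofReal (H₁ p.1) * ENNReal.ofReal (H₂ p.2))) ≤
            ENNReal.ofReal C *
              ∑' p : ℂ × ℂ, (Z' p : ℝ≥0∞) * (ENNReal.ofReal (H₁ p.1) * ENNReal.ofReal (H₂ p.2)) := by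
  obtain ⟨CH, hCH1, hHarnack⟩ := harnack_sector a b hb κ hκ
  have hCH0 : 0 ≤ CH := by linarith
  obtain ⟨t, ht⟩ := covering_finset κ hκ
  set M : ℝ := ((t.card : ℝ) + 1) with hMdef
  refine ⟨CH * CH * (M * N), by positivity, ?_⟩
  intro H₁ H₂ hH₁ hH₂ Z Z' hZS hZ'S hsparse hdom
  set w : ℂ × ℂ → ℝ≥0∞ := fun p => ENNReal.ofReal (H₁ p.1) * ENNReal.ofReal (H₂ p.2) with hwdef
  -- selection function
  set φ : ℂ × ℂ → ℂ × ℂ := fun p => if h : Z p ≠ 0 then Classical.choose (hdom p h) else p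
    with hφdef
  have hφspec : ∀ p, Z p ≠ 0 → Z' (φ p) ≠ 0 ∧ dist p (φ p) ≤ κ := by
    intro p hp
    simp only [hφdef, dif_pos hp]
    exact Classical.choose_spec (hdom p hp)
  -- step 1 : pointwise Harnack comparison
  have hstep1 : ∀ p : ℂ × ℂ, (Z p : ℝ≥0∞) * w p ≤
      ENNReal.ofReal CH * ENNReal.ofReal CH * ((Z p : ℝ≥0∞) * w (φ p)) := by
    intro p
    by_cases hp : Z p = 0
    · simp [hp]
    · obtain ⟨hZ'φ, hdφ⟩ := hφspec p hp
      obtain ⟨hp1, hp2⟩ := hZS p hp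
      obtain ⟨hq1, hq2⟩ := hZ'S (φ p) hZ'φ
      have hd1 : dist p.1 (φ p).1 ≤ κ := by
        calc dist p.1 (φ p).1 ≤ dist p (φ p) := by
              rw [Prod.dist_eq]; exact le_max_left _ _
          _ ≤ κ := hdφ
      have hd2 : dist p.2 (φ p).2 ≤ κ := by
        calc dist p.2 (φ p).2 ≤ dist p (φ p) := by
              rw [Prod.dist_eq]; exact le_max_right _ _
          _ ≤ κ := hdφ
      have h1 : H₁ p.1 ≤ CH * H₁ (φ p).1 := hHarnack H₁ hH₁ p.1 hp1 (φ p).1 hq1 hd1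
      have h2 : H₂ p.2 ≤ CH * H₂ (φ p).2 := hHarnack H₂ hH₂ p.2 hp2 (φ p).2 hq2 hd2
      have e1 : ENNReal.ofReal (H₁ p.1) ≤ ENNReal.ofReal CH * ENNReal.ofReal (H₁ (φ p).1) := by
        rw [← ENNReal.ofReal_mul hCH0]
        exact ENNReal.ofReal_le_ofReal h1
      have e2 : ENNReal.ofReal (H₂ p.2) ≤ ENNReal.ofReal CH * ENNReal.ofReal (H₂ (φ p).2) := by
        rw [← ENNReal.ofReal_mul hCH0]
        exact ENNReal.ofReal_le_ofReal h2
      calc (Z p : ℝ≥0∞) * w p ≤ (Z p : ℝ≥0∞) *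
            ((ENNReal.ofReal CH * ENNReal.ofReal (H₁ (φ p).1)) *
              (ENNReal.ofReal CH * ENNReal.ofReal (H₂ (φ p).2))) := by
            exact mul_le_mul_right (mul_le_mul' e1 e2) _
        _ = ENNReal.ofReal CH * ENNReal.ofReal CH * ((Z p : ℝ≥0∞) * w (φ p)) := by
            simp only [hwdef]; ring
  -- step 2 : fiberwise decomposition
  have hfiber : (∑' p : ℂ × ℂ, (Z p : ℝ≥0∞) * w (φ p)) =
      ∑' q : ℂ × ℂ, ∑' p : (φ ⁻¹' {q} : Set (ℂ × ℂ)), (Z p : ℝ≥0∞) * w (φ p) := by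
    rw [← (Equiv.sigmaFiberEquiv φ).tsum_eq (fun p => (Z p : ℝ≥0∞) * w (φ p))]
    exact ENNReal.tsum_sigma (fun q (p : (φ ⁻¹' {q} : Set (ℂ × ℂ))) => (Z p : ℝ≥0∞) * w (φ p))
  -- step 3 : bound each fiber
  have hfiberbound : ∀ q : ℂ × ℂ,
      (∑' p : (φ ⁻¹' {q} : Set (ℂ × ℂ)), (Z p : ℝ≥0∞) * w (φ p)) ≤
        ENNReal.ofReal (M * N) * ((Z' q : ℝ≥0∞) * w q) := by
    intro q
    by_cases hq : Z' q = 0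
    · have : ∀ p : (φ ⁻¹' {q} : Set (ℂ × ℂ)), (Z p : ℝ≥0∞) * w (φ p) = 0 := by
        rintro ⟨p, hp⟩
        by_cases hZp : Z p = 0
        · simp [hZp]
        · exfalso
          have := (hφspec p hZp).1
          rw [Set.mem_preimage, Set.mem_singleton_iff] at hp
          rw [hp] at this
          exact this hq
      rw [tsum_congr this]
      simp
    · -- each fiber point is within κ of q, use sparsity + covering
      have hwq : ∀ p : (φ ⁻¹' {q} : Set (ℂ × ℂ)), (Z p : ℝ≥0∞) * w (φ p)
          = (Z p : ℝ≥0∞) * w q := by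
        rintro ⟨p, hp⟩
        rw [Set.mem_preimage, Set.mem_singleton_iff] at hp
        simp [hp]
      rw [tsum_congr hwq, ENNReal.tsum_mul_right]
      have hcount : (∑' p : (φ ⁻¹' {q} : Set (ℂ × ℂ)), (Z p : ℝ≥0∞)) ≤
          ENNReal.ofReal (M * N) := by
        rw [tsum_subtype (φ ⁻¹' {q} : Set (ℂ × ℂ)) (fun y => ((Z y : ℝ≥0∞)))]
        have hpoint : ∀ p : ℂ × ℂ,
            Set.indicator (φ ⁻¹' {q}) (fun y => ((Z y : ℝ≥0∞))) p ≤
            ∑ x ∈ t, Set.indicator (ball (q + x) 1) (fun y => ((Z y : ℝ≥0∞))) p := by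
          intro p
          by_cases hp : p ∈ φ ⁻¹' {q}
          · rw [Set.indicator_of_mem hp]
            by_cases hZp : Z p = 0
            · simp [hZp]
            · have hpq : p ∈ closedBall q κ := by
                rw [mem_closedBall]
                have := (hφspec p hZp).2
                rw [Set.mem_preimage, Set.mem_singleton_iff] at hp
                rwa [hp] at this
              obtain ⟨x, hxt, hx⟩ := ht q p hpq
              calc ((Z p : ℝ≥0∞)) =
                  Set.indicator (ball (q + x) 1) (fun y => ((Z y : ℝ≥0∞))) p := by
                    rw [Set.indicator_of_mem hx]
                _ ≤ _ := Finset.single_le_sum (f := fun x =>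
                    Set.indicator (ball (q + x) 1) (fun y => ((Z y : ℝ≥0∞))) p)
                    (fun _ _ => zero_le) hxt
          · rw [Set.indicator_of_notMem hp]
            exact zero_le
        calc (∑' p : ℂ × ℂ, Set.indicator (φ ⁻¹' {q}) (fun y => ((Z y : ℝ≥0∞))) p)
            ≤ ∑' p : ℂ × ℂ, ∑ x ∈ t,
                Set.indicator (ball (q + x) 1) (fun y => ((Z y : ℝ≥0∞))) p :=
              ENNReal.tsum_le_tsum hpoint
          _ = ∑ x ∈ t, ∑' p : ℂ × ℂ,
                Set.indicator (ball (q + x) 1) (fun y => ((Z y : ℝ≥0∞))) p := by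
              rw [Summable.tsum_finsetSum (fun i _ => ENNReal.summable)]
          _ ≤ ∑ x ∈ t, ENNReal.ofReal N := by
              exact Finset.sum_le_sum (fun x _ => hsparse (q + x))
          _ = (t.card : ℝ≥0∞) * ENNReal.ofReal N := by
              rw [Finset.sum_const, nsmul_eq_mul]
          _ ≤ ENNReal.ofReal M * ENNReal.ofReal N := by
              apply mul_le_mul_left
              rw [hMdef]
              push_cast
              rw [ENNReal.ofReal_add (by positivity) (by norm_num)]
              simp [ENNReal.ofReal_natCast]
          _ = ENNReal.ofReal (M * N) := by
              rw [ENNReal.ofReal_mul (by positivity)]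
      calc (∑' p : (φ ⁻¹' {q} : Set (ℂ × ℂ)), (Z p : ℝ≥0∞)) * w q
          ≤ ENNReal.ofReal (M * N) * w q := mul_le_mul_left hcount _
        _ ≤ ENNReal.ofReal (M * N) * ((Z' q : ℝ≥0∞) * w q) := by
            apply mul_le_mul_right
            apply le_mul_of_one_le_left zero_le
            exact_mod_cast Nat.one_le_iff_ne_zero.mpr hq
  -- assemble
  calc (∑' p : ℂ × ℂ, (Z p : ℝ≥0∞) * w p)
      ≤ ∑' p : ℂ × ℂ, ENNReal.ofReal CH * ENNReal.ofReal CH * ((Z p : ℝ≥0∞) * w (φ p)) :=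
        ENNReal.tsum_le_tsum hstep1
    _ = ENNReal.ofReal CH * ENNReal.ofReal CH * ∑' p : ℂ × ℂ, (Z p : ℝ≥0∞) * w (φ p) :=
        ENNReal.tsum_mul_left
    _ = ENNReal.ofReal CH * ENNReal.ofReal CH *
        ∑' q : ℂ × ℂ, ∑' p : (φ ⁻¹' {q} : Set (ℂ × ℂ)), (Z p : ℝ≥0∞) * w (φ p) := by
        rw [hfiber]
    _ ≤ ENNReal.ofReal CH * ENNReal.ofReal CH *
        ∑' q : ℂ × ℂ, ENNReal.ofReal (M * N) * ((Z' q : ℝ≥0∞) * w q) := by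
        apply mul_le_mul_right
        exact ENNReal.tsum_le_tsum hfiberbound
    _ = ENNReal.ofReal CH * ENNReal.ofReal CH * ENNReal.ofReal (M * N) *
        ∑' q : ℂ × ℂ, (Z' q : ℝ≥0∞) * w q := by
        rw [ENNReal.tsum_mul_left]; ring
    _ = ENNReal.ofReal (CH * CH * (M * N)) * ∑' q : ℂ × ℂ, (Z' q : ℝ≥0∞) * w q := by
        rw [ENNReal.ofReal_mul (by positivity : (0:ℝ) ≤ CH * CH), ENNReal.ofReal_mul hCH0]
end
end
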